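/- arXiv:1709.00976 — 5 statements merged into one kernel-verified Lean document; each statement's English description precedes it below -/
import Mathlib

section
/- Let m ∈ ℕ and s ∈ (0, m) with s not an integer. Then ∫₀^∞ ρ^{s-1} / ∏_{k=1}^{m} (ρ + k²) dρ = 2 Γ(s) Γ(1-s) ∑_{k=1}^{m} (-1)^{k+1} k^{2s} / ((m-k)! (m+k)!). -/
open MeasureTheory Real Set
open scoped Classical BigOperators RealInnerProductSpace

noncomputable section

/-- Finite difference of order `2m`. -/
def deltaOp {E : Type*} [AddCommGroup E] [Module ℝ E] (m : ℕ)
    (u : E → ℝ) (x y : E) : ℝ :=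
  ∑ k ∈ Finset.Icc (-(m : ℤ)) (m : ℤ),
    (-1 : ℝ) ^ k * ((2 * m).choose ((m : ℤ) - k).toNat : ℝ) * u (x + k • y)

/-- The normalizing constant `c_{N,m,s}`. -/
def cnms (N m : ℕ) (s : ℝ) : ℝ :=
  if ∃ n : ℤ, s = (n : ℝ) then
    4 ^ s * Real.Gamma ((N : ℝ) / 2 + s) * Real.Gamma (s + 1) /
        (2 * Real.pi ^ ((N : ℝ) / 2)) *
      (∑ k ∈ Finset.Icc 2 m,
        (-1 : ℝ) ^ ((k : ℤ) - ⌊s⌋ + 1) * ((2 * m).choose (m - k) : ℝ) *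
          (k : ℝ) ^ (2 * s) * Real.log k)⁻¹
  else
    4 ^ s * Real.Gamma ((N : ℝ) / 2 + s) / (Real.pi ^ ((N : ℝ) / 2) * Real.Gamma (-s)) *
      (∑ k ∈ Finset.Icc 1 m,
        (-1 : ℝ) ^ k * ((2 * m).choose (m - k) : ℝ) * (k : ℝ) ^ (2 * s))⁻¹

/-- The hypersingular integral operator `L_{m,s}`. -/
def Lop (N m : ℕ) (s : ℝ) (u : EuclideanSpace ℝ (Fin N) → ℝ)
    (x : EuclideanSpace ℝ (Fin N)) : ℝ :=
  cnms N m s / 2 * ∫ y, deltaOp m u x y / ‖y‖ ^ ((N : ℝ) + 2 * s)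

/-- Membership in the weighted space `𝓛¹_s`. -/
def memL1 (N : ℕ) (s : ℝ) (u : EuclideanSpace ℝ (Fin N) → ℝ) : Prop :=
  MeasureTheory.LocallyIntegrable u ∧
    MeasureTheory.Integrable (fun x => |u x| / (1 + ‖x‖ ^ ((N : ℝ) + 2 * s)))

/-- `u` is `n` times continuously differentiable on `U` with locally `σ`-Hölder
continuous derivatives of order `n`. -/
def holderSpaceOn (N : ℕ) (n : ℕ) (σ : ℝ) (U : Set (EuclideanSpace ℝ (Fin N)))
    (u : EuclideanSpace ℝ (Fin N) → ℝ) : Prop :=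
  ContDiffOn ℝ n u U ∧
    ∀ x ∈ U, ∃ ε > (0 : ℝ), ∃ C : ℝ, 0 ≤ C ∧
      ∀ y ∈ U ∩ Metric.ball x ε, ∀ z ∈ U ∩ Metric.ball x ε,
        ‖iteratedFDerivWithin ℝ n u U y - iteratedFDerivWithin ℝ n u U z‖ ≤
          C * ‖y - z‖ ^ σ

/-- The space `C^t(U)` for `t > 0`, writing `t = n + σ` with `n ∈ ℕ₀`, `σ ∈ (0,1]`. -/
def Cspace (N : ℕ) (t : ℝ) (U : Set (EuclideanSpace ℝ (Fin N)))
    (u : EuclideanSpace ℝ (Fin N) → ℝ) : Prop :=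
  holderSpaceOn N (⌈t⌉ - 1).toNat (t - ((⌈t⌉ : ℝ) - 1)) U u

/-- The norm `‖u‖_{C^t(V)}`. -/
def CNorm (N : ℕ) (t : ℝ) (V : Set (EuclideanSpace ℝ (Fin N)))
    (u : EuclideanSpace ℝ (Fin N) → ℝ) : ℝ :=
  (∑ i ∈ Finset.range ((⌈t⌉ - 1).toNat + 1),
      ⨆ x : V, ‖iteratedFDerivWithin ℝ i u V x‖) +
    ⨆ p : V × V,
      ‖iteratedFDerivWithin ℝ (⌈t⌉ - 1).toNat u V p.1 -
          iteratedFDerivWithin ℝ (⌈t⌉ - 1).toNat u V p.2‖ /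
        ‖(p.1 : EuclideanSpace ℝ (Fin N)) - (p.2 : EuclideanSpace ℝ (Fin N))‖ ^
          (t - ((⌈t⌉ : ℝ) - 1))

/-- Fourier transform with the convention `(2π)^{-N/2} ∫ u(x) e^{-i x·ξ} dx`. -/
def FT (N : ℕ) (u : EuclideanSpace ℝ (Fin N) → ℝ)
    (ξ : EuclideanSpace ℝ (Fin N)) : ℂ :=
  (((2 * Real.pi) ^ (-(N : ℝ) / 2) : ℝ) : ℂ) *
    ∫ x : EuclideanSpace ℝ (Fin N),
      Complex.exp (-Complex.I * ((⟪x, ξ⟫ : ℝ) : ℂ)) * (u x : ℂ)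

/-- First-order partial derivative in direction `i`. -/
def pderiv' (N : ℕ) (i : Fin N) (u : EuclideanSpace ℝ (Fin N) → ℝ) :
    EuclideanSpace ℝ (Fin N) → ℝ :=
  fun x => fderiv ℝ u x (EuclideanSpace.single i 1)

/-- Multi-index partial derivative `∂^α`. -/
def mderiv (N : ℕ) (α : Fin N → ℕ) (u : EuclideanSpace ℝ (Fin N) → ℝ) :
    EuclideanSpace ℝ (Fin N) → ℝ :=
  (List.finRange N).foldr (fun i f => (pderiv' N i)^[α i] f) u

/-- The negative Laplacian `-Δ`. -/
def negLap (N : ℕ) (u : EuclideanSpace ℝ (Fin N) → ℝ) :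
    EuclideanSpace ℝ (Fin N) → ℝ :=
  fun x => -∑ i, pderiv' N i (pderiv' N i u) x

/-- The fractional Laplacian `(-Δ)^σ`, `σ ∈ (0,1)`. -/
def fracLap (N : ℕ) (σ : ℝ) (v : EuclideanSpace ℝ (Fin N) → ℝ)
    (x : EuclideanSpace ℝ (Fin N)) : ℝ :=
  cnms N 1 σ * ∫ y, (v x - v (x + y)) / ‖y‖ ^ ((N : ℝ) + 2 * σ)


section Aux

lemma factA (k : ℕ) : ∀ m : ℕ, (k.factorial : ℕ) * ∏ j ∈ Finset.Icc 1 m, (j + k) = (m + k).factorial := by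
  intro m
  induction m with
  | zero => simp
  | succ m ih =>
      rw [Finset.prod_Icc_succ_top (Nat.le_add_left 1 m), ← mul_assoc, ih]
      rw [show m + 1 + k = (m + k) + 1 by omega, Nat.factorial_succ]
      ring

lemma factB1 (k : ℕ) : ∀ m : ℕ, (∏ j ∈ Finset.Icc (k+1) m, (j - k)) = (m - k).factorial := by
  intro m
  induction m with
  | zero => simp
  | succ m ih =>
      by_cases h : k ≤ m
      · rw [Finset.prod_Icc_succ_top (by omega), ih, show m + 1 - k = (m - k) + 1 by omega,
          Nat.factorial_succ]
        ring
      · rw [show m + 1 - k = 0 by omega, Finset.Icc_eq_empty (by omega)]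
        simp

lemma factB2 (k : ℕ) (hk : 1 ≤ k) : (∏ j ∈ Finset.Icc 1 (k-1), (k - j)) = (k-1).factorial := by
  have h : Finset.Icc 1 (k-1) = Finset.Ico 1 k := Finset.ext (fun a => by simp [Finset.mem_Icc, Finset.mem_Ico]; omega)
  rw [h, Finset.prod_Ico_eq_prod_range]
  rw [← Finset.prod_range_add_one_eq_factorial (k-1), ← Finset.prod_range_reflect (fun i => i + 1) (k-1)]
  exact Finset.prod_congr rfl (fun i hi => by simp only [Finset.mem_range] at hi; omega)

lemma prodD (m k : ℕ) (hk1 : 1 ≤ k) (hkm : k ≤ m) :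
    ∏ j ∈ (Finset.Icc 1 m).erase k, ((j:ℝ)^2 - (k:ℝ)^2)
      = (-1:ℝ)^(k-1) * (m-k).factorial * (m+k).factorial / (2 * (k:ℝ)^2) := by
  have hkmem : k ∈ Finset.Icc 1 m := by simp [Finset.mem_Icc]; omega
  -- split each factor
  have h1 : ∏ j ∈ (Finset.Icc 1 m).erase k, ((j:ℝ)^2 - (k:ℝ)^2)
      = (∏ j ∈ (Finset.Icc 1 m).erase k, ((j:ℝ) - k)) * (∏ j ∈ (Finset.Icc 1 m).erase k, ((j:ℝ) + k)) := by
    rw [← Finset.prod_mul_distrib]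
    exact Finset.prod_congr rfl (fun j _ => by ring)
  -- plus part
  have hplus : (∏ j ∈ (Finset.Icc 1 m).erase k, ((j:ℝ) + k)) * (2 * k) * k.factorial
      = ((m+k).factorial : ℝ) := by
    have := Finset.prod_erase_mul (Finset.Icc 1 m) (fun j => ((j:ℝ) + k)) hkmem
    have hcast : ∏ j ∈ Finset.Icc 1 m, ((j:ℝ) + k) = ((∏ j ∈ Finset.Icc 1 m, (j + k) : ℕ) : ℝ) := by
      push_cast; ring_nf
      exact Finset.prod_congr rfl (fun _ _ => add_comm _ _)
    have hA := factA k m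
    have : (∏ j ∈ (Finset.Icc 1 m).erase k, ((j:ℝ) + k)) * ((k:ℝ) + k) * k.factorial
        = ((m+k).factorial : ℝ) := by
      rw [this, hcast]
      rw [mul_comm]
      exact_mod_cast congrArg (Nat.cast : ℕ → ℝ) hA
    calc (∏ j ∈ (Finset.Icc 1 m).erase k, ((j:ℝ) + k)) * (2 * k) * k.factorial
        = (∏ j ∈ (Finset.Icc 1 m).erase k, ((j:ℝ) + k)) * ((k:ℝ) + k) * k.factorial := by ring
      _ = ((m+k).factorial : ℝ) := this
  -- minus part
  have hsplit : (Finset.Icc 1 m).erase k = Finset.Icc 1 (k-1) ∪ Finset.Icc (k+1) m :=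
    Finset.ext (fun a => by
      simp [Finset.mem_erase, Finset.mem_Icc, Finset.mem_union]; omega)
  have hdisj : Disjoint (Finset.Icc 1 (k-1)) (Finset.Icc (k+1) m) := by
    rw [Finset.disjoint_left]
    intro a ha hb
    simp [Finset.mem_Icc] at ha hb
    omega
  have hlow : ∏ j ∈ Finset.Icc 1 (k-1), ((j:ℝ) - k) = (-1:ℝ)^(k-1) * (k-1).factorial := by
    have : ∏ j ∈ Finset.Icc 1 (k-1), ((j:ℝ) - k) = ∏ j ∈ Finset.Icc 1 (k-1), (-1 : ℝ) * ((k - j : ℕ) : ℝ) := by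
      refine Finset.prod_congr rfl (fun j hj => ?_)
      simp only [Finset.mem_Icc] at hj
      have : (((k - j : ℕ)) : ℝ) = (k : ℝ) - j := by
        have : j ≤ k := by omega
        push_cast [Nat.cast_sub this]; ring
      rw [this]; ring
    rw [this, Finset.prod_mul_distrib, Finset.prod_const, Nat.card_Icc]
    rw [← Nat.cast_prod, factB2 k hk1]
    norm_num
  have hhigh : ∏ j ∈ Finset.Icc (k+1) m, ((j:ℝ) - k) = ((m-k).factorial : ℝ) := by
    have : ∏ j ∈ Finset.Icc (k+1) m, ((j:ℝ) - k) = ∏ j ∈ Finset.Icc (k+1) m, ((j - k : ℕ) : ℝ) := by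
      refine Finset.prod_congr rfl (fun j hj => ?_)
      simp only [Finset.mem_Icc] at hj
      have hjk : k ≤ j := by omega
      push_cast [Nat.cast_sub hjk]; ring
    rw [this, ← Nat.cast_prod, factB1 k m]
  have hminus : ∏ j ∈ (Finset.Icc 1 m).erase k, ((j:ℝ) - k)
      = (-1:ℝ)^(k-1) * (k-1).factorial * (m-k).factorial := by
    rw [hsplit, Finset.prod_union hdisj, hlow, hhigh]
  -- combine
  have hkfact : (k.factorial : ℝ) = k * (k-1).factorial := by
    rw [show k = (k-1) + 1 by omega, Nat.factorial_succ]
    push_cast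
    ring
  have hk0 : (k : ℝ) ≠ 0 := by positivity
  have hf0 : ((k-1).factorial : ℝ) ≠ 0 := by positivity
  rw [h1, hminus]
  have hplus' : (∏ j ∈ (Finset.Icc 1 m).erase k, ((j:ℝ) + k))
      = ((m+k).factorial : ℝ) / (2 * k * k.factorial) := by
    field_simp at hplus ⊢
    linarith [hplus]
  rw [hplus', hkfact]
  field_simp

lemma betaRealIntegrable (σ : ℝ) (h0 : 0 < σ) (h1 : σ < 1) :
    IntegrableOn (fun x : ℝ => x^(σ-1) * (1-x)^(-σ)) (Ioo (0:ℝ) 1) := by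
  have hc := Complex.betaIntegral_convergent (u := (σ:ℂ)) (v := ((1-σ : ℝ):ℂ)) (by simpa using h0) (by simpa using (by linarith : 0 < 1 - σ))
  rw [intervalIntegrable_iff_integrableOn_Ioo_of_le (by norm_num)] at hc
  have := hc.norm
  refine IntegrableOn.congr_fun this (fun x hx => ?_) measurableSet_Ioo
  simp only [mem_Ioo] at hx
  have hx0 : (0:ℝ) ≤ x := hx.1.le
  have hx1 : (0:ℝ) ≤ 1 - x := by linarith [hx.2]
  have e1 : ((x:ℂ)) ^ ((σ:ℂ) - 1) = ((x ^ (σ-1) : ℝ) : ℂ) := by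
    rw [Complex.ofReal_cpow hx0]
    norm_num
  have e2 : ((1 - (x:ℂ))) ^ (((1-σ:ℝ):ℂ) - 1) = (((1-x) ^ (-σ) : ℝ) : ℂ) := by
    rw [show (1 : ℂ) - (x:ℂ) = (((1 - x : ℝ)):ℂ) by push_cast; ring,
      Complex.ofReal_cpow hx1]
    norm_num
  simp only [e1, e2, ← Complex.ofReal_mul, Complex.norm_real]
  rw [Real.norm_eq_abs, abs_of_nonneg (by positivity)]

lemma betaRealEq (σ : ℝ) (h0 : 0 < σ) (h1 : σ < 1) :
    ∫ x in Ioo (0:ℝ) 1, x^(σ-1) * (1-x)^(-σ) = Real.Gamma σ * Real.Gamma (1-σ) := by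
  have key := Complex.Gamma_mul_Gamma_eq_betaIntegral (s := (σ:ℂ)) (t := ((1-σ:ℝ):ℂ))
    (by simpa using h0) (by simpa using (by linarith : 0 < 1 - σ))
  have hsum : (σ:ℂ) + ((1-σ:ℝ):ℂ) = 1 := by push_cast; ring
  rw [hsum, Complex.Gamma_one, one_mul] at key
  -- key : Γσ * Γ(1-σ) = betaIntegral σ (1-σ) (complex)
  have hbeta : Complex.betaIntegral (σ:ℂ) ((1-σ:ℝ):ℂ)
      = ((∫ x in Ioo (0:ℝ) 1, x^(σ-1) * (1-x)^(-σ) : ℝ) : ℂ) := by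
    rw [Complex.betaIntegral, intervalIntegral.integral_of_le (by norm_num : (0:ℝ) ≤ 1),
      integral_Ioc_eq_integral_Ioo]
    rw [show ((∫ x in Ioo (0:ℝ) 1, x^(σ-1) * (1-x)^(-σ) : ℝ) : ℂ)
        = ∫ x in Ioo (0:ℝ) 1, ((x^(σ-1) * (1-x)^(-σ) : ℝ) : ℂ) from (integral_ofReal).symm]
    refine setIntegral_congr_fun measurableSet_Ioo (fun x hx => ?_)
    simp only [mem_Ioo] at hx
    have hx0 : (0:ℝ) ≤ x := hx.1.le
    have hx1 : (0:ℝ) ≤ 1 - x := by linarith [hx.2]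
    have e1 : ((x:ℂ)) ^ ((σ:ℂ) - 1) = ((x ^ (σ-1) : ℝ) : ℂ) := by
      rw [Complex.ofReal_cpow hx0]; norm_num
    have e2 : ((1 - (x:ℂ))) ^ (((1-σ:ℝ):ℂ) - 1) = (((1-x) ^ (-σ) : ℝ) : ℂ) := by
      rw [show (1 : ℂ) - (x:ℂ) = (((1 - x : ℝ)):ℂ) by push_cast; ring,
        Complex.ofReal_cpow hx1]
      norm_num
    simp only [e1, e2, ← Complex.ofReal_mul]
  rw [hbeta] at key
  have : ((Real.Gamma σ * Real.Gamma (1-σ) : ℝ) : ℂ) = ((∫ x in Ioo (0:ℝ) 1, x^(σ-1) * (1-x)^(-σ) : ℝ) : ℂ) := by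
    push_cast [← Complex.Gamma_ofReal]
    rw [← key]
    norm_num
  exact_mod_cast this.symm

section
variable {a σ : ℝ}

lemma subst_setup (ha : 0 < a) :
    (MeasurableSet (Ioi (0:ℝ))) ∧
    (∀ t ∈ Ioi (0:ℝ), HasDerivWithinAt (fun t => t / (t + a)) (a / (t + a)^2) (Ioi 0) t) ∧
    (InjOn (fun t => t / (t + a)) (Ioi (0:ℝ))) ∧
    ((fun t => t / (t + a)) '' (Ioi 0) = Ioo (0:ℝ) 1) := by
  refine ⟨measurableSet_Ioi, fun t ht => ?_, fun t ht u hu h => ?_, ?_⟩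
  · have h1 : t + a ≠ 0 := by simp only [mem_Ioi] at ht; positivity
    have h2 := ((hasDerivAt_id t).div ((hasDerivAt_id t).add_const a) h1)
    simp only [id] at h2
    have h3 : (1 * (t + a) - t * 1) / (t + a)^2 = a / (t + a)^2 := by ring_nf
    rw [h3] at h2
    exact h2.hasDerivWithinAt
  · simp only [mem_Ioi] at ht hu
    have h1 : t + a ≠ 0 := by positivity
    have h2 : u + a ≠ 0 := by positivity
    field_simp at h
    have : t * a = u * a := by linarith [h]
    exact mul_right_cancel₀ (ne_of_gt ha) this
  · ext y
    simp only [mem_image, mem_Ioi, mem_Ioo]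
    constructor
    · rintro ⟨t, ht, rfl⟩
      have h1 : 0 < t + a := by positivity
      constructor
      · positivity
      · rw [div_lt_one h1]; linarith
    · rintro ⟨hy0, hy1⟩
      have h1 : (0:ℝ) < 1 - y := by linarith [hy1]
      refine ⟨a * y / (1 - y), by positivity, ?_⟩
      have h2 : a * y / (1 - y) + a = a / (1 - y) := by field_simp; ring
      rw [h2, div_div_div_eq]
      rw [mul_comm (a*y) (1-y), mul_div_mul_comm, div_self (by positivity : (1:ℝ)-y ≠ 0), one_mul,
        mul_comm a y, mul_div_assoc, div_self (ne_of_gt ha), mul_one]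
end

lemma point_eq {a σ : ℝ} (ha : 0 < a) (t : ℝ) (ht : 0 < t) :
    |a/(t+a)^2| * ((t/(t+a))^(σ-1) * (1-(t/(t+a)))^(-σ)) = a^(1-σ) * (t^(σ-1)/(t+a)) := by
  have hb : 0 < t + a := by positivity
  have h1b : 1 - t/(t+a) = a/(t+a) := by field_simp; ring
  rw [h1b, abs_of_pos (by positivity), Real.div_rpow ht.le hb.le, Real.div_rpow ha.le hb.le,
    Real.rpow_neg hb.le σ]
  have e1 : a^(1-σ) = a * a^(-σ) := by
    have h := Real.rpow_add ha 1 (-σ)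
    rw [Real.rpow_one] at h
    rw [show (1:ℝ)-σ = 1 + -σ by ring, h]
  have e5 : (t+a)^σ = (t+a)^(σ-1) * (t+a) := by
    have h := Real.rpow_add hb (σ-1) 1
    rw [Real.rpow_one] at h
    rw [show σ-1+1 = σ by ring] at h
    exact h
  rw [e1, e5]
  have hU : (t+a)^(σ-1) ≠ 0 := by positivity
  have hu : (t+a) ≠ 0 := ne_of_gt hb
  field_simp

lemma keyIntegrable {a σ : ℝ} (ha : 0 < a) (h0 : 0 < σ) (h1 : σ < 1) :
    IntegrableOn (fun t : ℝ => t^(σ-1)/(t+a)) (Ioi 0) := by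
  obtain ⟨hms, hderiv, hinj, himg⟩ := subst_setup ha
  have hbeta := betaRealIntegrable σ h0 h1
  rw [← himg] at hbeta
  have h2 := (integrableOn_image_iff_integrableOn_abs_deriv_smul hms hderiv hinj
    (fun x => x^(σ-1)*(1-x)^(-σ))).mp hbeta
  have h4 : IntegrableOn (fun t => a^(1-σ) * (t^(σ-1)/(t+a))) (Ioi 0) := by
    refine h2.congr_fun (fun t ht => ?_) measurableSet_Ioi
    simpa [smul_eq_mul] using point_eq (σ := σ) ha t ht
  have h5 := h4.const_mul (a^(σ-1))
  refine IntegrableOn.congr_fun h5 (fun t ht => ?_) measurableSet_Ioi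
  have : a^(σ-1) * a^(1-σ) = 1 := by
    rw [← Real.rpow_add ha]
    norm_num
  show a^(σ-1) * (a^(1-σ) * (t^(σ-1)/(t+a))) = t^(σ-1)/(t+a)
  rw [← mul_assoc, this, one_mul]

lemma keyIntegral {a σ : ℝ} (ha : 0 < a) (h0 : 0 < σ) (h1 : σ < 1) :
    ∫ t in Ioi (0:ℝ), t^(σ-1)/(t+a) = a^(σ-1) * (Real.Gamma σ * Real.Gamma (1-σ)) := by
  obtain ⟨hms, hderiv, hinj, himg⟩ := subst_setup ha
  have h := integral_image_eq_integral_abs_deriv_smul hms hderiv hinj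
    (fun x => x^(σ-1)*(1-x)^(-σ))
  rw [himg, betaRealEq σ h0 h1] at h
  have h2 : ∫ t in Ioi (0:ℝ), |a/(t+a)^2| • ((t/(t+a))^(σ-1) * (1-(t/(t+a)))^(-σ))
      = a^(1-σ) * ∫ t in Ioi (0:ℝ), t^(σ-1)/(t+a) := by
    rw [← integral_const_mul]
    refine setIntegral_congr_fun measurableSet_Ioi (fun t ht => ?_)
    simpa [smul_eq_mul] using point_eq (σ := σ) ha t ht
  rw [h2] at h
  have h3 : a^(σ-1) * a^(1-σ) = 1 := by
    rw [← Real.rpow_add ha]; norm_num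
  calc ∫ t in Ioi (0:ℝ), t^(σ-1)/(t+a)
      = (a^(σ-1) * a^(1-σ)) * ∫ t in Ioi (0:ℝ), t^(σ-1)/(t+a) := by rw [h3, one_mul]
    _ = a^(σ-1) * (Real.Gamma σ * Real.Gamma (1-σ)) := by rw [mul_assoc, ← h]

lemma lagrange_id (m n : ℕ) (hn : n < m) (ρ : ℝ) :
    ρ ^ n = ∑ k ∈ Finset.Icc 1 m, (-((k:ℝ)^2))^n *
      ((∏ j ∈ (Finset.Icc 1 m).erase k, ((j:ℝ)^2 - (k:ℝ)^2))⁻¹ *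
        ∏ j ∈ (Finset.Icc 1 m).erase k, (ρ + (j:ℝ)^2)) := by
  set v : ℕ → ℝ := fun k => -((k:ℝ)^2) with hv
  have hvs : Set.InjOn v (Finset.Icc 1 m) := by
    intro i _ j _ hij
    simp only [hv, neg_inj] at hij
    have : (i:ℝ) = j := by
      nlinarith [sq_nonneg ((i:ℝ) - j), sq_nonneg ((i:ℝ) + j), Nat.cast_nonneg (α := ℝ) i, Nat.cast_nonneg (α := ℝ) j]
    exact_mod_cast this
  have hdeg : (Polynomial.X ^ n : Polynomial ℝ).degree < (Finset.Icc 1 m).card := by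
    rw [Polynomial.degree_X_pow, Nat.card_Icc]
    exact_mod_cast (by omega : n < m + 1 - 1)
  have h := Lagrange.eq_interpolate (v := v) hvs hdeg
  have h2 := congrArg (Polynomial.eval ρ) h
  rw [Polynomial.eval_pow, Polynomial.eval_X] at h2
  rw [Lagrange.interpolate_apply, Polynomial.eval_finset_sum] at h2
  rw [h2]
  refine Finset.sum_congr rfl (fun k hk => ?_)
  rw [Polynomial.eval_mul, Polynomial.eval_C, Lagrange.basis, Polynomial.eval_prod]
  congr 1
  · rw [Polynomial.eval_pow, Polynomial.eval_X]
  · rw [← Finset.prod_inv_distrib, ← Finset.prod_mul_distrib]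
    refine Finset.prod_congr rfl (fun j hj => ?_)
    rw [Lagrange.basisDivisor, Polynomial.eval_mul, Polynomial.eval_C, Polynomial.eval_sub,
      Polynomial.eval_X, Polynomial.eval_C]
    simp only [hv]
    ring_nf

lemma integrand_eq (m n : ℕ) (hn : n < m) (σ : ℝ) (ρ : ℝ) (hρ : 0 < ρ) :
    ρ^(σ + n - 1) / ∏ k ∈ Finset.Icc 1 m, (ρ + (k:ℝ)^2)
      = ∑ k ∈ Finset.Icc 1 m, ((-((k:ℝ)^2))^n *
          (∏ j ∈ (Finset.Icc 1 m).erase k, ((j:ℝ)^2 - (k:ℝ)^2))⁻¹) *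
            (ρ^(σ-1)/(ρ+(k:ℝ)^2)) := by
  have hrw : ρ^(σ + n - 1) = ρ^(σ-1) * ρ^n := by
    rw [show σ + n - 1 = (σ-1) + (n:ℝ) by ring, Real.rpow_add hρ, Real.rpow_natCast]
  rw [hrw, lagrange_id m n hn ρ, mul_div_assoc, Finset.sum_div, Finset.mul_sum]
  refine Finset.sum_congr rfl (fun k hk => ?_)
  have hkpos : 0 < ρ + (k:ℝ)^2 := by
    have hk1 : 1 ≤ k := (Finset.mem_Icc.mp hk).1
    have : (1:ℝ) ≤ (k:ℝ) := by exact_mod_cast hk1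
    nlinarith
  have hfull : ∏ j ∈ Finset.Icc 1 m, (ρ + (j:ℝ)^2)
      = (ρ + (k:ℝ)^2) * ∏ j ∈ (Finset.Icc 1 m).erase k, (ρ + (j:ℝ)^2) :=
    (Finset.mul_prod_erase _ _ hk).symm
  have herasene : ∏ j ∈ (Finset.Icc 1 m).erase k, (ρ + (j:ℝ)^2) ≠ 0 := by
    refine Finset.prod_ne_zero_iff.mpr (fun j hj => ?_)
    have hj1 : 1 ≤ j := (Finset.mem_Icc.mp (Finset.mem_of_mem_erase hj)).1
    have : (1:ℝ) ≤ (j:ℝ) := by exact_mod_cast hj1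
    nlinarith
  rw [hfull]
  rw [show ((-((k:ℝ)^2))^n * ((∏ j ∈ (Finset.Icc 1 m).erase k, ((j:ℝ)^2 - (k:ℝ)^2))⁻¹ *
      ∏ j ∈ (Finset.Icc 1 m).erase k, (ρ + (j:ℝ)^2)))
      = ((-((k:ℝ)^2))^n * (∏ j ∈ (Finset.Icc 1 m).erase k, ((j:ℝ)^2 - (k:ℝ)^2))⁻¹) *
        ∏ j ∈ (Finset.Icc 1 m).erase k, (ρ + (j:ℝ)^2) by ring,
    mul_div_mul_right _ _ herasene, mul_div_assoc', mul_div_assoc', mul_comm (ρ^(σ-1))]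

lemma term_alg (m k n : ℕ) (σ : ℝ) (hk1 : 1 ≤ k) (hkm : k ≤ m) (G : ℝ)
    (hD : ∏ j ∈ (Finset.Icc 1 m).erase k, ((j:ℝ)^2 - (k:ℝ)^2)
      = (-1:ℝ)^(k-1) * (m-k).factorial * (m+k).factorial / (2*(k:ℝ)^2)) :
    ((-((k:ℝ)^2))^n * (∏ j ∈ (Finset.Icc 1 m).erase k, ((j:ℝ)^2-(k:ℝ)^2))⁻¹) *
      (((k:ℝ)^2)^(σ-1) * ((-1:ℝ)^n * G))
    = 2 * G * ((-1:ℝ)^(k+1) * (k:ℝ)^(2*(σ+(n:ℝ))) / (((m-k).factorial:ℝ) * ((m+k).factorial:ℝ))) := by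
  have hk0 : (0:ℝ) < k := by exact_mod_cast hk1
  have e1 : (-((k:ℝ)^2))^n = (-1:ℝ)^n * (k:ℝ)^(2*n) := by
    rw [neg_pow, pow_mul]
  have e2 : ((k:ℝ)^2)^(σ-1) = (k:ℝ)^(2*σ-2) := by
    rw [show ((k:ℝ)^2) = (k:ℝ)^((2:ℕ):ℝ) from (Real.rpow_natCast (k:ℝ) 2).symm,
      ← Real.rpow_mul hk0.le]
    norm_num
    rw [show (2:ℝ)*(σ-1) = 2*σ-2 by ring]
  have e3 : (k:ℝ)^(2*n) * ((k:ℝ)^(2*σ-2) * (k:ℝ)^2) = (k:ℝ)^(2*(σ+(n:ℝ))) := by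
    rw [show ((k:ℝ)^(2*n) : ℝ) = (k:ℝ)^(((2*n:ℕ)):ℝ) from (Real.rpow_natCast (k:ℝ) (2*n)).symm,
      show ((k:ℝ)^2) = (k:ℝ)^(((2:ℕ)):ℝ) from (Real.rpow_natCast (k:ℝ) 2).symm,
      ← Real.rpow_add hk0, ← Real.rpow_add hk0]
    congr 1
    push_cast
    ring
  have hsign : ((-1:ℝ)^(k-1))⁻¹ = (-1:ℝ)^(k-1) := by
    refine inv_eq_of_mul_eq_one_left ?_
    rw [← pow_add]
    exact Even.neg_one_pow ⟨k-1, rfl⟩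
  have hsign2 : (-1:ℝ)^(k-1) = (-1:ℝ)^(k+1) := by
    rw [show k+1 = (k-1)+2 by omega, pow_add]
    norm_num
  have hF1 : ((m-k).factorial : ℝ) ≠ 0 := by positivity
  have hF2 : ((m+k).factorial : ℝ) ≠ 0 := by positivity
  have hDinv : (∏ j ∈ (Finset.Icc 1 m).erase k, ((j:ℝ)^2-(k:ℝ)^2))⁻¹
      = (-1:ℝ)^(k+1) * (2*(k:ℝ)^2) / (((m-k).factorial:ℝ) * ((m+k).factorial:ℝ)) := by
    rw [hD, ← hsign2]
    rw [div_eq_mul_inv, mul_inv, mul_inv, mul_inv, hsign, inv_inv]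
    field_simp
  rw [e1, e2, hDinv]
  rw [show ((-1:ℝ)^n * (k:ℝ)^(2*n)) * ((-1:ℝ)^(k+1) * (2*(k:ℝ)^2) / (((m-k).factorial:ℝ) * ((m+k).factorial:ℝ)))
      * ((k:ℝ)^(2*σ-2) * ((-1:ℝ)^n * G))
    = ((-1:ℝ)^n * (-1:ℝ)^n) * ((-1:ℝ)^(k+1)) * 2 * G *
        ((k:ℝ)^(2*n) * ((k:ℝ)^(2*σ-2) * (k:ℝ)^2)) / (((m-k).factorial:ℝ) * ((m+k).factorial:ℝ)) by ring]
  rw [e3, ← pow_add]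
  rw [Even.neg_one_pow ⟨n, rfl⟩]
  ring

lemma reflect_shift (s : ℝ) (n : ℕ) :
    Real.Gamma (s - n) * Real.Gamma (1-(s-n)) = (-1:ℝ)^n * (Real.Gamma s * Real.Gamma (1-s)) := by
  rw [Real.Gamma_mul_Gamma_one_sub, Real.Gamma_mul_Gamma_one_sub]
  rw [show π * (s - n) = π * s - n * π by ring, Real.sin_sub_nat_mul_pi]
  have hsign : ((-1:ℝ)^n)⁻¹ = (-1:ℝ)^n := by
    refine inv_eq_of_mul_eq_one_left ?_
    rw [← pow_add]
    exact Even.neg_one_pow ⟨n, rfl⟩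
  rw [div_eq_mul_inv, mul_inv, hsign, div_eq_mul_inv]
  ring


end Aux

/-- Value of `∫₀^∞ ρ^{s-1} / ∏_{k=1}^m (ρ + k²) dρ` for non-integer `s ∈ (0,m)`. -/
theorem stmt2 (m : ℕ) (s : ℝ) (hs : s ∈ Set.Ioo (0 : ℝ) m) (hsi : ∀ n : ℤ, s ≠ (n : ℝ)) :
    ∫ ρ in Set.Ioi (0 : ℝ), ρ ^ (s - 1) / ∏ k ∈ Finset.Icc 1 m, (ρ + (k : ℝ) ^ 2) =
      2 * Real.Gamma s * Real.Gamma (1 - s) *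
        ∑ k ∈ Finset.Icc 1 m,
          (-1 : ℝ) ^ (k + 1) * (k : ℝ) ^ (2 * s) /
            ((Nat.factorial (m - k) : ℝ) * (Nat.factorial (m + k) : ℝ)) := by
  obtain ⟨hs0, hsm⟩ := hs
  have hm0 : (0:ℝ) < m := lt_trans hs0 hsm
  set n : ℕ := ⌊s⌋.toNat with hndef
  have hfl0 : (0:ℤ) ≤ ⌊s⌋ := Int.floor_nonneg.mpr hs0.le
  have hncast : ((n:ℝ)) = ((⌊s⌋ : ℤ) : ℝ) := by
    rw [hndef]; exact_mod_cast congrArg (fun z : ℤ => (z:ℝ)) (Int.toNat_of_nonneg hfl0)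
  have hfls : ((⌊s⌋ : ℤ) : ℝ) ≤ s := Int.floor_le s
  have hflne : s ≠ ((⌊s⌋ : ℤ) : ℝ) := hsi ⌊s⌋
  set σ := s - (n:ℝ) with hσdef
  have h0 : 0 < σ := by
    rw [hσdef, hncast]
    exact sub_pos.mpr (lt_of_le_of_ne hfls (Ne.symm hflne))
  have h1 : σ < 1 := by
    rw [hσdef, hncast]
    have := Int.lt_floor_add_one s
    push_cast at this ⊢
    linarith
  have hnm : n < m := by
    have h2 : ⌊s⌋ < (m:ℤ) := Int.floor_lt.mpr (by exact_mod_cast hsm)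
    omega
  have hstep1 : (∫ ρ in Ioi (0:ℝ), ρ^(s-1) / ∏ k ∈ Finset.Icc 1 m, (ρ + (k:ℝ)^2))
      = ∑ k ∈ Finset.Icc 1 m, (((-((k:ℝ)^2))^n *
          (∏ j ∈ (Finset.Icc 1 m).erase k, ((j:ℝ)^2-(k:ℝ)^2))⁻¹) *
          (((k:ℝ)^2)^(σ-1) * (Real.Gamma σ * Real.Gamma (1-σ)))) := by
    have hcongr : ∀ ρ ∈ Ioi (0:ℝ), ρ^(s-1) / ∏ k ∈ Finset.Icc 1 m, (ρ + (k:ℝ)^2)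
        = ∑ k ∈ Finset.Icc 1 m, ((-((k:ℝ)^2))^n *
            (∏ j ∈ (Finset.Icc 1 m).erase k, ((j:ℝ)^2-(k:ℝ)^2))⁻¹) * (ρ^(σ-1)/(ρ+(k:ℝ)^2)) := by
      intro ρ hρ
      rw [show s - 1 = σ + n - 1 by rw [hσdef]; ring]
      exact integrand_eq m n hnm σ ρ hρ
    rw [setIntegral_congr_fun measurableSet_Ioi hcongr]
    rw [integral_finset_sum _ (fun k hk => ?_)]
    · refine Finset.sum_congr rfl (fun k hk => ?_)
      have hk1 : 1 ≤ k := (Finset.mem_Icc.mp hk).1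
      have hkpos : (0:ℝ) < (k:ℝ)^2 := by
        have : (1:ℝ) ≤ (k:ℝ) := by exact_mod_cast hk1
        positivity
      rw [integral_const_mul, keyIntegral hkpos h0 h1]
    · have hk1 : 1 ≤ k := (Finset.mem_Icc.mp hk).1
      have hkpos : (0:ℝ) < (k:ℝ)^2 := by
        have : (1:ℝ) ≤ (k:ℝ) := by exact_mod_cast hk1
        positivity
      exact (keyIntegrable hkpos h0 h1).const_mul _
  rw [hstep1, Finset.mul_sum]
  refine Finset.sum_congr rfl (fun k hk => ?_)
  obtain ⟨hk1, hkm⟩ := Finset.mem_Icc.mp hk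
  rw [show Real.Gamma σ * Real.Gamma (1-σ)
      = (-1:ℝ)^n * (Real.Gamma s * Real.Gamma (1-s)) by
    rw [hσdef]; exact reflect_shift s n]
  rw [term_alg m k n σ hk1 hkm (Real.Gamma s * Real.Gamma (1-s)) (prodD m k hk1 hkm)]
  rw [show 2*(σ+(n:ℝ)) = 2*s by rw [hσdef]; ring]
  ring

end
end

section
/- Let m ∈ ℕ and n ∈ {1, …, m-1}. Then ∫₀^∞ ρ^{n-1} / ∏_{k=1}^{m} (ρ + k²) dρ = 4 ∑_{k=1}^{m} (-1)^{k-n+1} k^{2n} ln(k) / ((m+k)! (m-k)!). -/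
open MeasureTheory Real Set
open scoped Classical BigOperators RealInnerProductSpace

noncomputable section

open Finset

lemma prodIccAdd (i : ℕ) : ∀ m : ℕ, ∏ j ∈ Finset.Icc 1 m, ((j:ℝ) + i)
    = (Nat.factorial (m+i) : ℝ) / (Nat.factorial i : ℝ)
  | 0 => by simp [div_self (Nat.cast_ne_zero.2 (Nat.factorial_ne_zero i) : (Nat.factorial i:ℝ) ≠ 0)]
  | (m+1) => by
    rw [Finset.prod_Icc_succ_top (Nat.le_add_left 1 m), prodIccAdd i m]
    have h : Nat.factorial (m+1+i) = Nat.factorial (m+i) * (m+i+1) := by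
      rw [show m+1+i = (m+i)+1 by ring, Nat.factorial_succ]; ring
    rw [h]
    have : (Nat.factorial i : ℝ) ≠ 0 := Nat.cast_ne_zero.2 (Nat.factorial_ne_zero i)
    rw [div_mul_eq_mul_div]
    congr 1
    push_cast
    ring

lemma prodIccSubLower (k : ℕ) : ∏ j ∈ Finset.Icc 1 k, ((j:ℝ) - (k+1))
    = (-1)^k * (Nat.factorial k : ℝ) := by
  have h1 : ∏ j ∈ Finset.Icc 1 k, ((j:ℝ) - (k+1)) = ∏ j ∈ Finset.Icc 1 k, (-(j:ℝ)) := by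
    refine Finset.prod_nbij' (fun j => k+1-j) (fun j => k+1-j) ?_ ?_ ?_ ?_ ?_ <;>
      intro a ha <;> simp only [Finset.mem_Icc] at * <;> try omega
    have h : ((k+1-a : ℕ):ℝ) = (k:ℝ)+1-(a:ℝ) := by
      push_cast [Nat.cast_sub (by omega : a ≤ k+1)]; ring
    rw [h]; ring
  rw [h1]
  have h2 : ∏ j ∈ Finset.Icc 1 k, (-(j:ℝ)) = (-1)^(Finset.Icc 1 k).card * ∏ j ∈ Finset.Icc 1 k, (j:ℝ) := by
    rw [← Finset.prod_const, ← Finset.prod_mul_distrib]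
    exact Finset.prod_congr rfl fun x _ => by ring
  rw [h2, ← Nat.cast_prod, show Finset.Icc 1 k = Finset.Ico 1 (k+1) by rfl,
    Finset.prod_Ico_id_eq_factorial, Nat.card_Ico]
  norm_num

lemma prodIccSubUpper (i m : ℕ) : ∏ j ∈ Finset.Icc (i+1) m, ((j:ℝ) - i)
    = (Nat.factorial (m-i) : ℝ) := by
  have h1 : ∏ j ∈ Finset.Icc (i+1) m, ((j:ℝ) - i) = ∏ j ∈ Finset.Icc 1 (m-i), ((j:ℕ):ℝ) := by
    refine Finset.prod_nbij' (fun j => j - i) (fun j => j + i) ?_ ?_ ?_ ?_ ?_ <;>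
      intro a ha <;> simp only [Finset.mem_Icc] at * <;> try omega
    push_cast [Nat.cast_sub (by omega : i ≤ a)]; ring
  rw [h1, ← Nat.cast_prod, show Finset.Icc 1 (m-i) = Finset.Ico 1 (m-i+1) by rfl,
    Finset.prod_Ico_id_eq_factorial]

lemma eraseSplit (m i : ℕ) (hi1 : 1 ≤ i) (him : i ≤ m) :
    (Finset.Icc 1 m).erase i = Finset.Icc 1 (i-1) ∪ Finset.Icc (i+1) m := by
  ext a; simp only [Finset.mem_erase, Finset.mem_Icc, Finset.mem_union]; omega

lemma prodErase (m i : ℕ) (hi1 : 1 ≤ i) (him : i ≤ m) :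
    ∏ j ∈ (Finset.Icc 1 m).erase i, ((j:ℝ)^2 - (i:ℝ)^2)
      = (-1)^(i-1) * (Nat.factorial (m-i) : ℝ) * (Nat.factorial (m+i) : ℝ)
        / (2 * (i:ℝ)^2) := by
  have hdisj : Disjoint (Finset.Icc 1 (i-1)) (Finset.Icc (i+1) m) := by
    rw [Finset.disjoint_left]; intro a ha hb
    simp only [Finset.mem_Icc] at ha hb; omega
  have hsplit : ∀ f : ℕ → ℝ, ∏ j ∈ (Finset.Icc 1 m).erase i, f j
      = (∏ j ∈ Finset.Icc 1 (i-1), f j) * ∏ j ∈ Finset.Icc (i+1) m, f j := by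
    intro f; rw [eraseSplit m i hi1 him, Finset.prod_union hdisj]
  have hfac : ∀ j : ℕ, ((j:ℝ)^2 - (i:ℝ)^2) = ((j:ℝ) - i) * ((j:ℝ) + i) :=
    fun j => by ring
  have h1 : ∏ j ∈ (Finset.Icc 1 m).erase i, ((j:ℝ)^2 - (i:ℝ)^2)
      = (∏ j ∈ (Finset.Icc 1 m).erase i, ((j:ℝ) - i)) * ∏ j ∈ (Finset.Icc 1 m).erase i, ((j:ℝ) + i) := by
    rw [← Finset.prod_mul_distrib]; exact Finset.prod_congr rfl fun j _ => hfac j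
  have h2 : ∏ j ∈ (Finset.Icc 1 m).erase i, ((j:ℝ) - i)
      = (-1)^(i-1) * (Nat.factorial (i-1) : ℝ) * (Nat.factorial (m-i) : ℝ) := by
    rw [hsplit, prodIccSubUpper i m]
    have := prodIccSubLower (i-1)
    rw [show (((i-1:ℕ):ℝ)+1) = (i:ℝ) by push_cast [Nat.cast_sub hi1]; ring] at this
    rw [this]
  have h3 : ∏ j ∈ (Finset.Icc 1 m).erase i, ((j:ℝ) + i)
      = (Nat.factorial (m+i) : ℝ) / ((Nat.factorial i : ℝ) * (2*i)) := by
    have hmem : i ∈ Finset.Icc 1 m := by simp [Finset.mem_Icc]; omega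
    have := Finset.mul_prod_erase (Finset.Icc 1 m) (fun j => ((j:ℝ) + i)) hmem
    rw [prodIccAdd i m] at this
    have hne : ((i:ℝ) + i) ≠ 0 := by positivity
    field_simp at this ⊢
    nlinarith [this]
  rw [h1, h2, h3]
  have hifacN : Nat.factorial i = i * Nat.factorial (i-1) := by
    cases i with
    | zero => omega
    | succ k => simp [Nat.factorial_succ]
  have hifac : (Nat.factorial i : ℝ) = i * (Nat.factorial (i-1) : ℝ) := by
    exact_mod_cast congrArg (Nat.cast : ℕ → ℝ) hifacN
  have hne : (Nat.factorial (i-1) : ℝ) ≠ 0 := Nat.cast_ne_zero.2 (Nat.factorial_ne_zero _)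
  have hipos : (0:ℝ) < i := by exact_mod_cast hi1
  rw [hifac]
  field_simp

lemma vinj (m : ℕ) : Set.InjOn (fun k : ℕ => -((k:ℝ)^2)) (Finset.Icc 1 m) := by
  intro a _ b _ h
  simp only [neg_inj] at h
  have h2 : a^2 = b^2 := by exact_mod_cast h
  exact Nat.pow_left_injective (by norm_num) h2

lemma lagId {m n : ℕ} (hn : 1 ≤ n) (hnm : n < m) :
    (Polynomial.X : Polynomial ℝ)^(n-1) =
      ∑ i ∈ Finset.Icc 1 m, Polynomial.C
          ((-((i:ℝ)^2))^(n-1) * ∏ j ∈ (Finset.Icc 1 m).erase i, (-((i:ℝ)^2) - (-((j:ℝ)^2)))⁻¹)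
        * ∏ j ∈ (Finset.Icc 1 m).erase i, (Polynomial.X - Polynomial.C (-((j:ℝ)^2))) := by
  set v : ℕ → ℝ := fun k => -((k:ℝ)^2) with hv
  have hcard : (Finset.Icc 1 m).card = m := by rw [Nat.card_Icc]; omega
  have hdeg : ((Polynomial.X : Polynomial ℝ)^(n-1)).degree < (Finset.Icc 1 m).card := by
    rw [Polynomial.degree_X_pow, hcard]
    exact_mod_cast Nat.lt_of_lt_of_le (by omega) (le_refl m)
  have h := Lagrange.eq_interpolate (vinj m) hdeg
  rw [Lagrange.interpolate_apply] at h
  rw [h]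
  refine Finset.sum_congr rfl fun i hi => ?_
  show _ = _
  rw [Lagrange.basis]
  unfold Lagrange.basisDivisor
  rw [Finset.prod_mul_distrib,
    ← map_prod Polynomial.C (fun j : ℕ => (-((i:ℝ)^2) - (-((j:ℝ)^2)))⁻¹) ((Finset.Icc 1 m).erase i),
    ← mul_assoc, ← Polynomial.C_mul, Polynomial.eval_pow, Polynomial.eval_X]

noncomputable def cc (m n : ℕ) (i : ℕ) : ℝ :=
  (-((i:ℝ)^2))^(n-1) * ∏ j ∈ (Finset.Icc 1 m).erase i, (-((i:ℝ)^2) - (-((j:ℝ)^2)))⁻¹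

lemma pointwiseId {m n : ℕ} (hn : 1 ≤ n) (hnm : n < m) (ρ : ℝ) :
    ρ^(n-1) = ∑ i ∈ Finset.Icc 1 m, cc m n i * ∏ j ∈ (Finset.Icc 1 m).erase i, (ρ + (j:ℝ)^2) := by
  have h := congrArg (Polynomial.eval ρ) (lagId hn hnm (m := m))
  simp only [Polynomial.eval_pow, Polynomial.eval_X, Polynomial.eval_finset_sum, Polynomial.eval_mul, Polynomial.eval_C, Polynomial.eval_prod, Polynomial.eval_sub] at h
  rw [h]
  refine Finset.sum_congr rfl fun i _ => ?_
  rw [cc]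
  congr 1
  exact Finset.prod_congr rfl fun j _ => by ring

lemma sumZero {m n : ℕ} (hn : 1 ≤ n) (hnm : n < m) :
    ∑ i ∈ Finset.Icc 1 m, cc m n i = 0 := by
  have h := congrArg (fun p : Polynomial ℝ => p.coeff (m-1)) (lagId hn hnm (m := m))
  simp only [Polynomial.coeff_X_pow, Polynomial.finset_sum_coeff, Polynomial.coeff_C_mul] at h
  rw [if_neg (by omega)] at h
  rw [show (∑ i ∈ Finset.Icc 1 m, cc m n i) = ∑ x ∈ Finset.Icc 1 m,
      ((-((x:ℝ))^2)^(n-1) * ∏ j ∈ (Finset.Icc 1 m).erase x, (-((x:ℝ)^2) - (-((j:ℝ)^2)))⁻¹) *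
        (∏ j ∈ (Finset.Icc 1 m).erase x, (Polynomial.X - Polynomial.C (-((j:ℝ)^2)))).coeff (m-1)
      from Finset.sum_congr rfl fun i hi => ?_, ← h]
  rw [cc]
  have hmonic : ∀ j ∈ (Finset.Icc 1 m).erase i,
      (Polynomial.X - Polynomial.C (-((j:ℝ)^2))).Monic := fun j _ => Polynomial.monic_X_sub_C _
  have hP : (∏ j ∈ (Finset.Icc 1 m).erase i, (Polynomial.X - Polynomial.C (-((j:ℝ)^2)))).Monic :=
    Polynomial.monic_prod_of_monic _ _ hmonic
  have hdeg : (∏ j ∈ (Finset.Icc 1 m).erase i,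
      (Polynomial.X - Polynomial.C (-((j:ℝ)^2)))).natDegree = m - 1 := by
    rw [Polynomial.natDegree_prod _ _ (fun j hj => (hmonic j hj).ne_zero)]
    simp only [Polynomial.natDegree_X_sub_C]
    rw [Finset.sum_const, smul_eq_mul, mul_one, Finset.card_erase_of_mem hi, Nat.card_Icc]
    omega
  conv_rhs => rw [← hdeg]
  rw [hP.coeff_natDegree, mul_one]

lemma ccFormula {m n i : ℕ} (hn : 1 ≤ n) (hi1 : 1 ≤ i) (him : i ≤ m) :
    cc m n i = 2 * (-1)^(n+i) * (i:ℝ)^(2*n)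
      / ((Nat.factorial (m+i) : ℝ) * (Nat.factorial (m-i) : ℝ)) := by
  have hA : ((Nat.factorial (m-i)):ℝ) ≠ 0 := Nat.cast_ne_zero.2 (Nat.factorial_ne_zero _)
  have hB : ((Nat.factorial (m+i)):ℝ) ≠ 0 := Nat.cast_ne_zero.2 (Nat.factorial_ne_zero _)
  have hipos : (0:ℝ) < i := by exact_mod_cast hi1
  rw [cc]
  have h1 : ∏ j ∈ (Finset.Icc 1 m).erase i, (-((i:ℝ)^2) - (-((j:ℝ)^2)))⁻¹
      = (∏ j ∈ (Finset.Icc 1 m).erase i, ((j:ℝ)^2 - (i:ℝ)^2))⁻¹ := by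
    rw [← Finset.prod_inv_distrib]
    exact Finset.prod_congr rfl fun j _ => by rw [← inv_inj]; ring_nf
  rw [h1, prodErase m i hi1 him]
  have hsq : (-1:ℝ)^(i-1)*(-1:ℝ)^(i-1) = 1 := by
    rw [← pow_add, ← two_mul, pow_mul]; norm_num
  have hx : ((-1:ℝ)^(i-1) * ((Nat.factorial (m-i)):ℝ) * ((Nat.factorial (m+i)):ℝ)
        / (2*(i:ℝ)^2))⁻¹
      = (-1:ℝ)^(i-1) * (2*(i:ℝ)^2)
        / (((Nat.factorial (m-i)):ℝ) * ((Nat.factorial (m+i)):ℝ)) := by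
    refine inv_eq_of_mul_eq_one_right ?_
    have hne : ((2*(i:ℝ)^2) * (((Nat.factorial (m-i)):ℝ) * ((Nat.factorial (m+i)):ℝ))) ≠ 0 := by
      positivity
    calc ((-1:ℝ)^(i-1) * ((Nat.factorial (m-i)):ℝ) * ((Nat.factorial (m+i)):ℝ) / (2*(i:ℝ)^2))
          * ((-1:ℝ)^(i-1) * (2*(i:ℝ)^2)
            / (((Nat.factorial (m-i)):ℝ) * ((Nat.factorial (m+i)):ℝ)))
        = ((-1:ℝ)^(i-1)*(-1:ℝ)^(i-1)) *
          (((2*(i:ℝ)^2) * (((Nat.factorial (m-i)):ℝ) * ((Nat.factorial (m+i)):ℝ)))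
            / ((2*(i:ℝ)^2) * (((Nat.factorial (m-i)):ℝ) * ((Nat.factorial (m+i)):ℝ)))) := by
          ring
      _ = 1 := by rw [hsq, one_mul, div_self hne]
  rw [hx]
  have hneg : (-((i:ℝ)^2))^(n-1) = (-1:ℝ)^(n-1) * (i:ℝ)^(2*(n-1)) := by
    rw [neg_pow, pow_mul]
  have hpow : (i:ℝ)^(2*n) = (i:ℝ)^(2*(n-1)) * (i:ℝ)^2 := by
    rw [← pow_add]; congr 1; omega
  have hsign : (-1:ℝ)^(n-1) * (-1:ℝ)^(i-1) = (-1:ℝ)^(n+i) := by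
    rw [show (n+i) = (n-1)+(i-1)+2 by omega, pow_add, pow_add]; norm_num
  rw [hneg, hpow, ← hsign]
  ring

lemma prodPos {ρ : ℝ} (hρ : 0 ≤ ρ) (s : Finset ℕ) (hs : ∀ k ∈ s, 1 ≤ k) :
    0 < ∏ k ∈ s, (ρ + (k:ℝ)^2) := by
  refine Finset.prod_pos fun k hk => ?_
  have : (1:ℝ) ≤ (k:ℝ) := by exact_mod_cast hs k hk
  nlinarith

lemma divId {m n : ℕ} (hn : 1 ≤ n) (hnm : n < m) {ρ : ℝ} (hρ : 0 ≤ ρ) :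
    ρ^(n-1) / ∏ k ∈ Finset.Icc 1 m, (ρ + (k:ℝ)^2)
      = ∑ i ∈ Finset.Icc 1 m, cc m n i * (ρ + (i:ℝ)^2)⁻¹ := by
  rw [pointwiseId hn hnm ρ, Finset.sum_div]
  refine Finset.sum_congr rfl fun i hi => ?_
  have h1 : ∏ k ∈ Finset.Icc 1 m, (ρ + (k:ℝ)^2)
      = (ρ + (i:ℝ)^2) * ∏ j ∈ (Finset.Icc 1 m).erase i, (ρ + (j:ℝ)^2) :=
    (Finset.mul_prod_erase _ _ hi).symm
  have h2 : (0:ℝ) < ∏ j ∈ (Finset.Icc 1 m).erase i, (ρ + (j:ℝ)^2) :=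
    prodPos hρ _ fun k hk => by simp only [Finset.mem_erase, Finset.mem_Icc] at hk; omega
  have h3 : (0:ℝ) < ρ + (i:ℝ)^2 := by
    simp only [Finset.mem_Icc] at hi
    have : (1:ℝ) ≤ (i:ℝ) := by exact_mod_cast hi.1
    nlinarith
  rw [h1]
  rw [mul_comm (ρ + (i:ℝ)^2), ← div_div, mul_div_assoc, div_self (ne_of_gt h2), mul_one,
    div_eq_mul_inv]

lemma fInt {m n : ℕ} (hn : 1 ≤ n) (hnm : n < m) : IntegrableOn
    (fun ρ : ℝ => ρ^(n-1) / ∏ k ∈ Finset.Icc 1 m, (ρ + (k:ℝ)^2)) (Ioi 0) := by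
  have hcont : Continuous fun ρ : ℝ => ∏ k ∈ Finset.Icc 1 m, (ρ + (k:ℝ)^2) :=
    continuous_finset_prod _ fun k _ => by continuity
  have hmeas : Measurable fun ρ : ℝ => ρ^(n-1) / ∏ k ∈ Finset.Icc 1 m, (ρ + (k:ℝ)^2) :=
    (measurable_id.pow_const _).div hcont.measurable
  refine Integrable.mono' (g := fun ρ => (1+ρ^2)⁻¹)
    integrable_inv_one_add_sq.integrableOn hmeas.aestronglyMeasurable.restrict ?_
  filter_upwards [ae_restrict_mem measurableSet_Ioi] with ρ hρ
  have hρ0 : (0:ℝ) < ρ := hρ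
  have hP : (0:ℝ) < ∏ k ∈ Finset.Icc 1 m, (ρ + (k:ℝ)^2) :=
    prodPos hρ0.le _ fun k hk => by simp only [Finset.mem_Icc] at hk; omega
  have hfpos : (0:ℝ) ≤ ρ^(n-1) / ∏ k ∈ Finset.Icc 1 m, (ρ + (k:ℝ)^2) := by positivity
  rw [Real.norm_eq_abs, abs_of_nonneg hfpos]
  rw [inv_eq_one_div, div_le_div_iff₀ hP (by positivity : (0:ℝ) < 1+ρ^2), one_mul]
  have c1 : ρ^(n-1) * (1+ρ^2) ≤ (ρ+1)^(n-1) * (ρ+1)^2 := by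
    refine mul_le_mul (pow_le_pow_left₀ hρ0.le (by linarith) _) (by nlinarith) (by positivity)
      (by positivity)
  have c2 : (ρ+1)^(n-1) * (ρ+1)^2 = (ρ+1)^(n+1) := by
    rw [← pow_add]; congr 1; omega
  have c3 : (ρ+1)^(n+1) ≤ (ρ+1)^m := pow_le_pow_right₀ (by linarith) (by omega)
  have c4 : (ρ+1)^m ≤ ∏ k ∈ Finset.Icc 1 m, (ρ + (k:ℝ)^2) := by
    have : (ρ+1)^m = ∏ k ∈ Finset.Icc 1 m, (ρ+1) := by
      rw [Finset.prod_const, Nat.card_Icc]; norm_num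
    rw [this]
    refine Finset.prod_le_prod (fun k _ => by positivity) fun k hk => ?_
    simp only [Finset.mem_Icc] at hk
    have : (1:ℝ) ≤ (k:ℝ) := by exact_mod_cast hk.1
    nlinarith
  linarith

lemma intervalVal {m n : ℕ} (hn : 1 ≤ n) (hnm : n < m) {R : ℝ} (hR : 0 < R) :
    ∫ ρ in (0:ℝ)..R, ρ^(n-1) / ∏ k ∈ Finset.Icc 1 m, (ρ + (k:ℝ)^2)
      = ∑ i ∈ Finset.Icc 1 m, cc m n i * (Real.log (R + (i:ℝ)^2) - Real.log ((i:ℝ)^2)) := by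
  have h1 : ∫ ρ in (0:ℝ)..R, ρ^(n-1) / ∏ k ∈ Finset.Icc 1 m, (ρ + (k:ℝ)^2)
      = ∫ ρ in (0:ℝ)..R, ∑ i ∈ Finset.Icc 1 m, cc m n i * (ρ + (i:ℝ)^2)⁻¹ := by
    refine intervalIntegral.integral_congr fun ρ hρ => ?_
    rw [Set.uIcc_of_le hR.le] at hρ
    exact divId hn hnm hρ.1
  rw [h1]
  have h2 : ∀ i ∈ Finset.Icc 1 m, IntervalIntegrable
      (fun ρ : ℝ => cc m n i * (ρ + (i:ℝ)^2)⁻¹) volume 0 R := by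
    intro i hi
    simp only [Finset.mem_Icc] at hi
    have hi1 : (1:ℝ) ≤ (i:ℝ) := by exact_mod_cast hi.1
    refine ContinuousOn.intervalIntegrable ?_
    refine continuousOn_const.mul ((continuousOn_id.add continuousOn_const).inv₀ fun x hx => ?_)
    rw [Set.uIcc_of_le hR.le] at hx
    have : (0:ℝ) ≤ x := hx.1
    simp only [Pi.add_apply, id]
    nlinarith
  rw [intervalIntegral.integral_finset_sum h2]
  refine Finset.sum_congr rfl fun i hi => ?_
  simp only [Finset.mem_Icc] at hi
  have hi1 : (1:ℝ) ≤ (i:ℝ) := by exact_mod_cast hi.1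
  rw [intervalIntegral.integral_const_mul]
  congr 1
  have h3 := intervalIntegral.integral_comp_add_right (a := (0:ℝ)) (b := R)
    (fun x : ℝ => x⁻¹) ((i:ℝ)^2)
  rw [h3, zero_add]
  rw [integral_inv_of_pos (by nlinarith) (by nlinarith)]
  rw [Real.log_div (by nlinarith) (by nlinarith)]

lemma finalVal {m n : ℕ} (hn : 1 ≤ n) (hnm : n < m) :
    ∫ ρ in Set.Ioi (0:ℝ), ρ^(n-1) / ∏ k ∈ Finset.Icc 1 m, (ρ + (k:ℝ)^2)
      = ∑ i ∈ Finset.Icc 1 m, cc m n i * (0 - Real.log ((i:ℝ)^2)) := by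
  have hlim1 : Filter.Tendsto
      (fun R => ∫ ρ in (0:ℝ)..R, ρ^(n-1) / ∏ k ∈ Finset.Icc 1 m, (ρ + (k:ℝ)^2))
      Filter.atTop (nhds (∫ ρ in Set.Ioi (0:ℝ), ρ^(n-1) / ∏ k ∈ Finset.Icc 1 m, (ρ + (k:ℝ)^2))) :=
    intervalIntegral_tendsto_integral_Ioi 0 (fInt hn hnm) Filter.tendsto_id
  have hlim2 : Filter.Tendsto
      (fun R : ℝ => ∑ i ∈ Finset.Icc 1 m,
        cc m n i * (Real.log (1 + (i:ℝ)^2/R) - Real.log ((i:ℝ)^2)))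
      Filter.atTop (nhds (∑ i ∈ Finset.Icc 1 m, cc m n i * (0 - Real.log ((i:ℝ)^2)))) := by
    refine tendsto_finset_sum _ fun i _ => ?_
    refine Filter.Tendsto.const_mul _ (Filter.Tendsto.sub_const ?_ _)
    have hbase : Filter.Tendsto (fun R : ℝ => 1 + (i:ℝ)^2/R) Filter.atTop (nhds 1) := by
      have := (tendsto_const_nhds (x := ((i:ℝ)^2)) (f := Filter.atTop)).div_atTop
        (Filter.tendsto_id (α := ℝ))
      simpa using (tendsto_const_nhds (x := (1:ℝ))).add this
    have hlog := (Real.continuousAt_log (by norm_num : (1:ℝ) ≠ 0)).tendsto.comp hbase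
    simpa [Real.log_one, Function.comp_def] using hlog
  have heq : ∀ᶠ R : ℝ in Filter.atTop,
      (∑ i ∈ Finset.Icc 1 m,
        cc m n i * (Real.log (1 + (i:ℝ)^2/R) - Real.log ((i:ℝ)^2)))
      = ∫ ρ in (0:ℝ)..R, ρ^(n-1) / ∏ k ∈ Finset.Icc 1 m, (ρ + (k:ℝ)^2) := by
    filter_upwards [Filter.eventually_gt_atTop (0:ℝ)] with R hR
    rw [intervalVal hn hnm hR]
    have hsplit : ∑ i ∈ Finset.Icc 1 m,
        cc m n i * (Real.log (R + (i:ℝ)^2) - Real.log ((i:ℝ)^2))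
        = (∑ i ∈ Finset.Icc 1 m,
            cc m n i * (Real.log (1 + (i:ℝ)^2/R) - Real.log ((i:ℝ)^2)))
          + (∑ i ∈ Finset.Icc 1 m, cc m n i) * Real.log R := by
      rw [Finset.sum_mul, ← Finset.sum_add_distrib]
      refine Finset.sum_congr rfl fun i hi => ?_
      simp only [Finset.mem_Icc] at hi
      have hi1 : (1:ℝ) ≤ (i:ℝ) := by exact_mod_cast hi.1
      have hlogsplit : Real.log (R + (i:ℝ)^2)
          = Real.log (1 + (i:ℝ)^2/R) + Real.log R := by
        rw [← Real.log_mul (by positivity) (ne_of_gt hR)]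
        congr 1
        field_simp
      rw [hlogsplit]; ring
    rw [hsplit, sumZero hn hnm, zero_mul, add_zero]
  exact tendsto_nhds_unique hlim1 (Filter.Tendsto.congr' heq hlim2)



/-- Value of `∫₀^∞ ρ^{n-1} / ∏_{k=1}^m (ρ + k²) dρ` for integer `n ∈ {1,…,m-1}`. -/
theorem stmt3 (m n : ℕ) (hn : 1 ≤ n) (hnm : n < m) :
    ∫ ρ in Set.Ioi (0 : ℝ), ρ ^ (n - 1) / ∏ k ∈ Finset.Icc 1 m, (ρ + (k : ℝ) ^ 2) =
      4 * ∑ k ∈ Finset.Icc 1 m,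
        (-1 : ℝ) ^ ((k : ℤ) - (n : ℤ) + 1) * (k : ℝ) ^ (2 * n) * Real.log k /
          ((Nat.factorial (m + k) : ℝ) * (Nat.factorial (m - k) : ℝ)) := by
  rw [finalVal hn hnm, Finset.mul_sum]
  refine Finset.sum_congr rfl fun i hi => ?_
  simp only [Finset.mem_Icc] at hi
  rw [ccFormula hn hi.1 hi.2]
  have hz : (-1 : ℝ) ^ ((i : ℤ) - (n : ℤ) + 1) = (-1:ℝ)^(i+n+1) := by
    have h1 : ((i:ℤ)-(n:ℤ)+1) = ((i+n+1:ℕ):ℤ) - ((2*n:ℕ):ℤ) := by push_cast; ring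
    rw [h1, zpow_sub₀ (by norm_num : (-1:ℝ) ≠ 0), zpow_natCast, zpow_natCast,
      pow_mul]
    norm_num
  have hlog : Real.log ((i:ℝ)^2) = 2 * Real.log i := by
    rw [Real.log_pow]; norm_num
  have hsgn : (-1:ℝ)^(i+n+1) = -(-1:ℝ)^(n+i) := by
    rw [pow_succ, add_comm i n]; ring
  rw [hz, hlog, hsgn]
  ring


end
end

section
/- Let m ∈ ℕ. Then for every n ∈ ℕ₀ with n < m one has ∑_{k=-m}^{m} (-1)^k · C(2m, m-k) · k^{2n} = 0 (with the convention 0⁰ = 1 for the k = 0, n = 0 term), and moreover ∑_{k=-m}^{m} (-1)^k · C(2m, m-k) · k^{2m} = (-1)^m (2m)!. -/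
open MeasureTheory Real Set
open scoped Classical BigOperators RealInnerProductSpace

noncomputable section

section FwdDiffHelpers
open fwdDiff Finset

lemma fwdDiff_pow_step (d : ℕ) :
    fwdDiff (1:ℝ) (fun y => y ^ d) =
      ∑ i ∈ Finset.range d, (d.choose i : ℝ) • fun y : ℝ => y ^ i := by
  funext x
  rw [Finset.sum_apply]
  simp only [Pi.smul_apply, smul_eq_mul, fwdDiff]
  have h := add_pow x 1 d
  simp only [one_pow, mul_one] at h
  rw [h, Finset.sum_range_succ, Nat.choose_self, Nat.cast_one, mul_one, add_sub_cancel_right]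
  exact Finset.sum_congr rfl fun i _ => mul_comm _ _

lemma fwdDiff_pow_aux (n : ℕ) :
    (∀ d : ℕ, d < n → ∀ x : ℝ, (fwdDiff (1:ℝ))^[n] (fun y => y ^ d) x = 0) ∧
      (∀ x : ℝ, (fwdDiff (1:ℝ))^[n] (fun y => y ^ n) x = n.factorial) := by
  induction n with
  | zero =>
      refine ⟨fun d hd => by omega, fun x => by simp⟩
  | succ n IH =>
      have key : ∀ d : ℕ, ∀ x : ℝ, (fwdDiff (1:ℝ))^[n+1] (fun y => y ^ d) x =
          ∑ i ∈ Finset.range d, (d.choose i : ℝ) * (fwdDiff (1:ℝ))^[n] (fun y => y ^ i) x := by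
        intro d x
        rw [Function.iterate_succ_apply, fwdDiff_pow_step, fwdDiff_iter_finset_sum,
          Finset.sum_apply]
        exact Finset.sum_congr rfl fun i _ => by
          rw [fwdDiff_iter_const_smul]; simp
      constructor
      · intro d hd x
        rw [key]
        refine Finset.sum_eq_zero fun i hi => ?_
        have hi' : i < n := lt_of_lt_of_le (Finset.mem_range.mp hi) (by omega)
        rw [IH.1 i hi', mul_zero]
      · intro x
        rw [key, Finset.sum_range_succ]
        have h0 : ∀ i ∈ Finset.range n,
            ((n+1).choose i : ℝ) * (fwdDiff (1:ℝ))^[n] (fun y => y ^ i) x = 0 := by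
          intro i hi
          rw [IH.1 i (Finset.mem_range.mp hi), mul_zero]
        rw [Finset.sum_eq_zero h0, zero_add, IH.2 x]
        rw [Nat.choose_succ_self_right]
        push_cast [Nat.factorial_succ]
        ring

lemma reindex_sum (m d : ℕ) :
    ∑ k ∈ Finset.Icc (-(m:ℤ)) (m:ℤ),
        (-1:ℝ)^k * ((2*m).choose ((m:ℤ)-k).toNat : ℝ) * (k:ℝ)^d
      = (-1:ℝ)^m * (fwdDiff (1:ℝ))^[2*m] (fun y : ℝ => y ^ d) (-(m:ℝ)) := by
  have himg : Finset.Icc (-(m:ℤ)) (m:ℤ) =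
      Finset.image (fun j : ℕ => (j:ℤ) - m) (Finset.range (2*m+1)) := by
    ext k
    simp only [Finset.mem_image, Finset.mem_range, Finset.mem_Icc]
    constructor
    · intro h
      exact ⟨(k + m).toNat, by omega, by omega⟩
    · rintro ⟨j, hj, rfl⟩
      omega
  have hinj : Set.InjOn (fun j : ℕ => (j:ℤ) - m) (Finset.range (2*m+1)) := by
    intro a _ b _ hab
    simpa using hab
  rw [fwdDiff_iter_eq_sum_shift, Finset.mul_sum, himg, Finset.sum_image hinj]
  refine Finset.sum_congr rfl fun j hj => ?_
  have hj' : j ≤ 2*m := by simpa using Nat.lt_succ_iff.mp (Finset.mem_range.mp hj)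
  have hsign : (-1:ℝ) ^ ((j:ℤ) - m) = (-1:ℝ)^j * (-1:ℝ)^m := by
    rw [zpow_sub₀ (by norm_num : (-1:ℝ) ≠ 0), zpow_natCast, zpow_natCast,
      div_eq_mul_inv, ← inv_pow, inv_neg, inv_one]
  have hsign2 : (-1:ℝ) ^ (2*m - j) = (-1:ℝ)^j := by
    have h2 : 2*m - j + 2*j = 2*m + j := by omega
    calc (-1:ℝ)^(2*m-j) = (-1:ℝ)^(2*m-j) * (((-1:ℝ)^2)^j) := by norm_num
      _ = (-1:ℝ)^(2*m-j+2*j) := by rw [← pow_mul, ← pow_add]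
      _ = (-1:ℝ)^(2*m+j) := by rw [h2]
      _ = (-1:ℝ)^j := by rw [pow_add, pow_mul]; norm_num
  have hch : ((m:ℤ) - ((j:ℤ) - m)).toNat = 2*m - j := by omega
  have hcs : (2*m).choose (2*m - j) = (2*m).choose j := Nat.choose_symm hj'
  rw [hsign, hch, hcs]
  have hval : (-(m:ℝ) + j • (1:ℝ)) = (((j:ℤ) - m : ℤ) : ℝ) := by push_cast; ring
  rw [zsmul_eq_mul, hval]
  push_cast [hsign2]
  ring

end FwdDiffHelpers

/-- Vanishing moments of the binomial weights, and the top moment. -/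
theorem stmt6 (m : ℕ) :
    (∀ n : ℕ, n < m →
        ∑ k ∈ Finset.Icc (-(m : ℤ)) (m : ℤ),
            (-1 : ℝ) ^ k * ((2 * m).choose ((m : ℤ) - k).toNat : ℝ) * (k : ℝ) ^ (2 * n) = 0) ∧
      ∑ k ∈ Finset.Icc (-(m : ℤ)) (m : ℤ),
          (-1 : ℝ) ^ k * ((2 * m).choose ((m : ℤ) - k).toNat : ℝ) * (k : ℝ) ^ (2 * m) =
        (-1 : ℝ) ^ m * ((2 * m).factorial : ℝ) := by
  constructor
  · intro n hn
    rw [reindex_sum m (2*n), (fwdDiff_pow_aux (2*m)).1 (2*n) (by omega), mul_zero]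
  · rw [reindex_sum m (2*m), (fwdDiff_pow_aux (2*m)).2]

end
end

section
/- Let n ∈ ℕ, n ≥ 1, and let g : ℝ → ℝ be 2n-times continuously differentiable. Then for all x, t ∈ ℝ, δ_n g(x,t) = (-1)^n t^{2n} ∫_{[0,1]^{2n}} g^{(2n)}(x + ∑_{k=1}^{n} (t_{k,1} - t_{k,2}) t) dt_{1,1} … dt_{n,1} dt_{1,2} … dt_{n,2}, where the integral is over the 2n variables t_{1,1}, …, t_{n,1}, t_{1,2}, …, t_{n,2} ∈ [0,1]. -/
open MeasureTheory Real Set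
open scoped Classical BigOperators RealInnerProductSpace

noncomputable section

namespace Stmt7Aux

lemma iterD_add (m k : ℕ) (g : ℝ → ℝ) :
    iteratedDeriv (m + k) g = iteratedDeriv k (iteratedDeriv m g) := by
  induction k with
  | zero => simp
  | succ k ih => rw [← Nat.add_assoc, iteratedDeriv_succ, ih, ← iteratedDeriv_succ]

lemma contDiff_iterD (m : ℕ) {k : ℕ} (g : ℝ → ℝ) (h : ContDiff ℝ ((m + k : ℕ) : ℕ∞) g) :
    ContDiff ℝ (k : ℕ∞) (iteratedDeriv m g) := by
  induction m generalizing g with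
  | zero => simpa using h
  | succ m ih =>
    have h2 : ContDiff ℝ (((m + k : ℕ) : ℕ∞) + 1) g := by
      rw [show m + 1 + k = m + k + 1 from by omega] at h
      exact_mod_cast h
    rw [iteratedDeriv_succ']
    exact ih (deriv g) (contDiff_succ_iff_deriv.mp h2).2.2

lemma ftc_aux (G : ℝ → ℝ) (hG : ContDiff ℝ 1 G) (c t : ℝ) (ht : t ≠ 0) :
    ∫ a in Icc (0:ℝ) 1, deriv G (c + a * t) = (G (c + t) - G c) / t := by
  rw [integral_Icc_eq_integral_Ioc, ← intervalIntegral.integral_of_le zero_le_one]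
  have hd : ∀ a ∈ uIcc (0:ℝ) 1, HasDerivAt (fun a => G (c + a * t) / t)
      (deriv G (c + a * t)) a := by
    intro a _
    have h1 : HasDerivAt (fun a : ℝ => c + a * t) t a := by
      simpa using ((hasDerivAt_id a).mul_const t).const_add c
    have h2 : HasDerivAt G (deriv G (c + a * t)) (c + a * t) :=
      ((hG.differentiable one_ne_zero) (c + a * t)).hasDerivAt
    have := (h2.comp a h1).div_const t
    simpa [mul_div_assoc, mul_div_cancel_right₀ _ ht] using this
  have hint : IntervalIntegrable (fun a => deriv G (c + a * t)) volume 0 1 :=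
    ((hG.continuous_deriv le_rfl).comp
      (continuous_const.add (continuous_id.mul continuous_const))).intervalIntegrable 0 1
  rw [intervalIntegral.integral_eq_sub_of_hasDerivAt hd hint]
  ring

lemma split_pi (n : ℕ) (F : (Fin (n + 1) → ℝ) → ℝ) (hF : Continuous F) :
    ∫ v in Icc (0 : Fin (n + 1) → ℝ) 1, F v
      = ∫ a in Icc (0 : ℝ) 1, ∫ y in Icc (0 : Fin n → ℝ) 1,
          F ((0 : Fin (n + 1)).insertNth a y) := by
  set e : ℝ × (Fin n → ℝ) ≃ᵐ (Fin (n + 1) → ℝ) :=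
    (MeasurableEquiv.piFinSuccAbove (fun _ => ℝ) 0).symm with he
  have hem : MeasurePreserving e :=
    (volume_preserving_piFinSuccAbove (fun _ : Fin (n + 1) => ℝ) 0).symm _
  have heπ : (e ⁻¹' Icc 0 1) = Icc (0:ℝ) 1 ×ˢ Icc (0 : Fin n → ℝ) 1 :=
    ((Fin.insertNthOrderIso (fun _ => ℝ) 0).preimage_Icc _ _).trans (Icc_prod_eq _ _)
  rw [← hem.map_eq, setIntegral_map_equiv, heπ, Measure.volume_eq_prod, setIntegral_prod]
  · rfl
  · rw [← Measure.volume_eq_prod]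
    exact ((hF.comp (continuous_fst.finInsertNth 0 continuous_snd)).continuousOn).integrableOn_compact
      (isCompact_Icc.prod isCompact_Icc)

lemma FD (n : ℕ) (g : ℝ → ℝ) (hg : ContDiff ℝ (n : ℕ∞) g) (x t : ℝ) (ht : t ≠ 0) :
    ∫ v in Icc (0 : Fin n → ℝ) 1, iteratedDeriv n g (x + (∑ k, v k) * t)
      = (∑ j ∈ Finset.range (n + 1),
          (-1 : ℝ) ^ (n + j) * (n.choose j) * g (x + j * t)) / t ^ n := by
  induction n generalizing g x with
  | zero =>
    simp only [iteratedDeriv_zero, Finset.univ_eq_empty, Finset.sum_empty, zero_mul, add_zero]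
    rw [setIntegral_const]
    simp [measureReal_def, Real.volume_Icc_pi]
  | succ n ih =>
    have hg' : ContDiff ℝ (n : ℕ∞) (deriv g) := by
      have h' : ContDiff ℝ ((n : ℕ∞) + 1) g := by
        exact_mod_cast hg
      exact (contDiff_succ_iff_deriv.mp h').2.2
    have hcont : Continuous (iteratedDeriv (n+1) g) := by
      exact hg.continuous_iteratedDeriv (n+1) le_rfl
    rw [split_pi n (fun v => iteratedDeriv (n+1) g (x + (∑ k, v k) * t))
      (hcont.comp (by continuity))]
    have key : ∀ a : ℝ,
        (∫ y in Icc (0 : Fin n → ℝ) 1,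
          iteratedDeriv (n+1) g (x + (∑ k, (0 : Fin (n+1)).insertNth a y k) * t))
        = (∑ j ∈ Finset.range (n + 1),
            (-1 : ℝ) ^ (n + j) * (n.choose j) * deriv g ((x + a * t) + j * t)) / t ^ n := by
      intro a
      have hsum : ∀ y : Fin n → ℝ,
          (∑ k, (0 : Fin (n+1)).insertNth a y k) = a + ∑ k, y k := by
        intro y
        rw [Fin.sum_univ_succAbove _ (0 : Fin (n+1))]
        simp
      have : ∀ y : Fin n → ℝ,
          iteratedDeriv (n+1) g (x + (∑ k, (0 : Fin (n+1)).insertNth a y k) * t)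
            = iteratedDeriv n (deriv g) ((x + a * t) + (∑ k, y k) * t) := by
        intro y
        rw [iteratedDeriv_succ', hsum]
        ring_nf
      rw [integral_congr_ae (Filter.Eventually.of_forall fun y => this y)]
      exact ih (deriv g) hg' (x + a * t)
    rw [integral_congr_ae (Filter.Eventually.of_forall key)]
    rw [integral_div, integral_finset_sum]
    · have hg1 : ContDiff ℝ 1 g := hg.of_le (by norm_cast; omega)
      have : ∀ j ∈ Finset.range (n+1),
          (∫ a in Icc (0:ℝ) 1, (-1:ℝ) ^ (n + j) * (n.choose j) * deriv g ((x + a * t) + j * t))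
          = (-1:ℝ) ^ (n + j) * (n.choose j) * ((g (x + j*t + t) - g (x + j*t)) / t) := by
        intro j _
        rw [integral_const_mul]
        congr 1
        have := ftc_aux g hg1 (x + j * t) t ht
        rw [← this]
        apply integral_congr_ae (Filter.Eventually.of_forall fun a => ?_)
        ring_nf
      rw [Finset.sum_congr rfl this]
      have expand : ∑ j ∈ Finset.range (n+1),
          (-1:ℝ) ^ (n + j) * (n.choose j) * ((g (x + j*t + t) - g (x + j*t)) / t)
          = ((∑ j ∈ Finset.range (n+1), (-1:ℝ) ^ (n+j) * (n.choose j) * g (x + (j+1)*t))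
            - ∑ j ∈ Finset.range (n+1), (-1:ℝ) ^ (n+j) * (n.choose j) * g (x + j*t)) / t := by
        rw [← Finset.sum_sub_distrib, Finset.sum_div]
        exact Finset.sum_congr rfl fun j _ => by field_simp; ring
      rw [expand]
      have pascal : ∑ j ∈ Finset.range (n + 1 + 1),
          (-1 : ℝ) ^ (n + 1 + j) * ((n+1).choose j) * g (x + j * t)
          = (∑ j ∈ Finset.range (n+1), (-1:ℝ) ^ (n+j) * (n.choose j) * g (x + (j+1)*t))
            - ∑ j ∈ Finset.range (n+1), (-1:ℝ) ^ (n+j) * (n.choose j) * g (x + j*t) := by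
        rw [Finset.sum_range_succ' (fun j => (-1 : ℝ) ^ (n + 1 + j) * ((n+1).choose j) * g (x + j * t)) (n+1)]
        have h2 : ∑ j ∈ Finset.range (n+1), (-1:ℝ) ^ (n+j) * (n.choose j) * g (x + j*t)
            = ∑ i ∈ Finset.range (n+1), (-1:ℝ) ^ (n+i+1) * (n.choose (i+1)) * g (x + (i+1)*t)
              + (-1:ℝ)^n * g x := by
          have : ∑ j ∈ Finset.range (n+1+1), (-1:ℝ) ^ (n+j) * (n.choose j) * g (x + j*t)
              = ∑ j ∈ Finset.range (n+1), (-1:ℝ) ^ (n+j) * (n.choose j) * g (x + j*t) := by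
            rw [Finset.sum_range_succ]
            simp [Nat.choose_eq_zero_of_lt (Nat.lt_succ_self n)]
          rw [← this, Finset.sum_range_succ' (fun j => (-1 : ℝ) ^ (n + j) * (n.choose j) * g (x + j * t)) (n+1)]
          congr 1
          · exact Finset.sum_congr rfl fun i _ => by push_cast; ring
          · norm_num
        rw [h2]
        have h3 : ∀ i ∈ Finset.range (n+1),
            (-1 : ℝ) ^ (n + 1 + (i+1)) * (((n+1).choose (i+1) : ℕ) : ℝ) * g (x + ((i+1 : ℕ) : ℝ) * t)
            = (-1:ℝ) ^ (n+i) * (n.choose i) * g (x + ((i:ℝ)+1)*t)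
              - (-1:ℝ) ^ (n+i+1) * (n.choose (i+1)) * g (x + ((i:ℝ)+1)*t) := by
          intro i _
          have hc : (((n+1).choose (i+1) : ℕ) : ℝ) = (n.choose i : ℝ) + (n.choose (i+1) : ℝ) := by
            rw [Nat.choose_succ_succ]; push_cast; ring
          rw [hc]
          push_cast
          ring
        rw [Finset.sum_congr rfl h3, Finset.sum_sub_distrib]
        simp only [Nat.choose_zero_right, Nat.cast_zero, Nat.cast_one, zero_mul, add_zero, mul_one]
        ring
      rw [pascal]
      rw [div_div, ← pow_succ']
    · intro j _
      apply Integrable.const_mul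
      have : Continuous (fun a : ℝ => deriv g (x + a * t + j * t)) :=
        (hg.continuous_deriv (by norm_cast; omega)).comp (by continuity)
      exact (this.continuousOn).integrableOn_compact isCompact_Icc

lemma vandermonde_group (n : ℕ) (h : ℕ → ℝ) :
    ∑ j ∈ Finset.range (n+1), ∑ i ∈ Finset.range (n+1),
        h (i + j) * (n.choose i) * (n.choose j)
      = ∑ m ∈ Finset.range (2*n+1), h m * ((2*n).choose m) := by
  rw [← Finset.sum_product']
  rw [← Finset.sum_fiberwise_of_maps_to (g := fun p : ℕ × ℕ => p.1 + p.2)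
    (t := Finset.range (2*n+1)) (fun p hp => by
      simp only [Finset.mem_product, Finset.mem_range] at hp ⊢; omega)]
  apply Finset.sum_congr rfl
  intro m hm
  have : ∀ p ∈ (Finset.range (n+1) ×ˢ Finset.range (n+1)).filter
      (fun p : ℕ × ℕ => p.1 + p.2 = m),
      h (p.2 + p.1) * (n.choose p.2) * (n.choose p.1)
        = h m * ((n.choose p.1) * (n.choose p.2)) := by
    intro p hp
    rw [Finset.mem_filter] at hp
    rw [add_comm p.2 p.1, hp.2]; ring
  rw [Finset.sum_congr rfl this, ← Finset.mul_sum]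
  congr 1
  have hsub : (Finset.range (n+1) ×ˢ Finset.range (n+1)).filter
      (fun p : ℕ × ℕ => p.1 + p.2 = m) ⊆ Finset.HasAntidiagonal.antidiagonal m := by
    intro p hp
    rw [Finset.mem_filter] at hp
    rw [Finset.HasAntidiagonal.mem_antidiagonal]
    exact hp.2
  rw [Finset.sum_subset hsub (fun p hp hnp => ?_)]
  · have := Nat.add_choose_eq n n m
    rw [two_mul]
    rw [this]
    push_cast
    rfl
  · rw [Finset.HasAntidiagonal.mem_antidiagonal] at hp
    have : ¬(p.1 < n + 1 ∧ p.2 < n + 1) := by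
      intro hc
      apply hnp
      rw [Finset.mem_filter, Finset.mem_product, Finset.mem_range, Finset.mem_range]
      exact ⟨⟨hc.1, hc.2⟩, hp⟩
    have : n < p.1 ∨ n < p.2 := by omega
    rcases this with h1 | h1
    · simp [Nat.choose_eq_zero_of_lt h1]
    · simp [Nat.choose_eq_zero_of_lt h1]

lemma reindexed (n : ℕ) (u : ℤ → ℝ) :
    ∑ k ∈ Finset.Icc (-(n:ℤ)) (n:ℤ),
        (-1:ℝ)^k * (((2*n).choose ((n:ℤ)-k).toNat : ℕ) : ℝ) * u k
      = ∑ m ∈ Finset.range (2*n+1), (-1:ℝ)^(m+n) * (((2*n).choose m : ℕ) : ℝ) * u ((m:ℤ) - n) := by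
  refine Finset.sum_nbij' (i := fun k => (k + n).toNat) (j := fun m => (m:ℤ) - n)
    ?_ ?_ ?_ ?_ ?_
  · intro k hk
    rw [Finset.mem_Icc] at hk
    rw [Finset.mem_range]
    omega
  · intro m hm
    rw [Finset.mem_range] at hm
    rw [Finset.mem_Icc]
    omega
  · intro k hk
    rw [Finset.mem_Icc] at hk
    omega
  · intro m hm
    rw [Finset.mem_range] at hm
    omega
  · intro k hk
    rw [Finset.mem_Icc] at hk
    set m : ℕ := (k + n).toNat with hm
    have hmk : (m : ℤ) = k + n := by omega
    have h1 : ((n:ℤ) - k).toNat = 2*n - m := by omega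
    have h2 : m ≤ 2*n := by omega
    have h3 : (2*n).choose (2*n - m) = (2*n).choose m := Nat.choose_symm h2
    have h4 : (-1:ℝ)^k = (-1:ℝ)^(m+n) := by
      have hh : ((m+n : ℕ) : ℤ) = k + 2*n := by omega
      rw [← zpow_natCast (-1:ℝ) (m+n), hh, zpow_add₀ (by norm_num : (-1:ℝ) ≠ 0)]
      have h5 : (-1:ℝ)^(2*(n:ℤ)) = 1 := by
        rw [zpow_mul]
        norm_num
      rw [show ((2:ℤ))*(n:ℤ) = ((2*n : ℕ) : ℤ) by push_cast; ring] at h5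
      rw [show ((2:ℤ))*(n:ℤ) = ((2*n : ℕ) : ℤ) by push_cast; ring, h5, mul_one]
    have h5 : (m:ℤ) - n = k := by omega
    rw [h1, h3, h4, h5]

lemma comb_main (n : ℕ) (u : ℤ → ℝ) :
    ∑ k ∈ Finset.Icc (-(n:ℤ)) (n:ℤ),
        (-1:ℝ)^k * (((2*n).choose ((n:ℤ)-k).toNat : ℕ) : ℝ) * u k
      = ∑ j ∈ Finset.range (n+1), ∑ i ∈ Finset.range (n+1),
          (-1:ℝ)^(i+j) * ((n.choose i : ℕ) : ℝ) * ((n.choose j : ℕ) : ℝ) * u ((i:ℤ) - j) := by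
  rw [reindexed]
  have hrefl : ∑ j ∈ Finset.range (n+1), ∑ i ∈ Finset.range (n+1),
      (-1:ℝ)^(i+j) * ((n.choose i : ℕ) : ℝ) * ((n.choose j : ℕ) : ℝ) * u ((i:ℤ) - j)
      = ∑ j ∈ Finset.range (n+1), ∑ i ∈ Finset.range (n+1),
        ((-1:ℝ)^(n+(i+j)) * u (((i+j:ℕ):ℤ) - n)) * ((n.choose i : ℕ) : ℝ) * ((n.choose j : ℕ) : ℝ) := by
    rw [← Finset.sum_range_reflect (fun j => ∑ i ∈ Finset.range (n+1),
      (-1:ℝ)^(i+j) * ((n.choose i : ℕ) : ℝ) * ((n.choose j : ℕ) : ℝ) * u ((i:ℤ) - j)) (n+1)]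
    apply Finset.sum_congr rfl
    intro j hj
    rw [Finset.mem_range] at hj
    have hjn : j ≤ n := by omega
    apply Finset.sum_congr rfl
    intro i _
    have e1 : n + 1 - 1 - j = n - j := by omega
    rw [e1]
    have e2 : (n.choose (n - j) : ℝ) = (n.choose j : ℝ) := by
      rw [Nat.choose_symm hjn]
    have e3 : (-1:ℝ)^(i+(n-j)) = (-1:ℝ)^(n+(i+j)) := by
      rw [neg_one_pow_eq_pow_mod_two, neg_one_pow_eq_pow_mod_two (n := n+(i+j))]
      congr 1
      omega
    have e4 : (i:ℤ) - ↑(n-j) = ((i+j:ℕ):ℤ) - n := by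
      rw [Nat.cast_sub hjn]; push_cast; ring
    rw [e2, e3, e4]
    ring
  rw [hrefl, vandermonde_group n (fun m => (-1:ℝ)^(n+m) * u ((m:ℤ) - n))]
  apply Finset.sum_congr rfl
  intro m _
  rw [add_comm m n]
  ring

end Stmt7Aux

open Stmt7Aux

/-- Integral representation of the finite difference `δ_n g(x,t)`. -/
theorem stmt7 (n : ℕ) (hn : 1 ≤ n) (g : ℝ → ℝ) (hg : ContDiff ℝ ((2 * n : ℕ) : ℕ∞) g)
    (x t : ℝ) :
    deltaOp n g x t =
      (-1 : ℝ) ^ n * t ^ (2 * n) *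
        ∫ v : Fin n → ℝ in Set.Icc 0 1, ∫ w : Fin n → ℝ in Set.Icc 0 1,
          iteratedDeriv (2 * n) g (x + (∑ k, (v k - w k)) * t) := by
  have halt : ∑ i ∈ Finset.range (n+1), (-1:ℝ)^i * (n.choose i) = 0 := by
    have h0 : n ≠ 0 := by omega
    exact_mod_cast Int.alternating_sum_range_choose_of_ne h0
  by_cases ht : t = 0
  · subst ht
    have h0 : deltaOp n g x 0 = 0 := by
      have hd := comb_main n (fun _ => g x)
      have : deltaOp n g x 0
          = ∑ k ∈ Finset.Icc (-(n:ℤ)) (n:ℤ),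
              (-1:ℝ)^k * (((2*n).choose ((n:ℤ)-k).toNat : ℕ) : ℝ) * (fun _ : ℤ => g x) k := by
        simp only [deltaOp, smul_zero, add_zero]
      rw [this, hd]
      apply Finset.sum_eq_zero
      intro j _
      have : ∑ i ∈ Finset.range (n+1),
          (-1:ℝ)^(i+j) * ((n.choose i : ℕ) : ℝ) * ((n.choose j : ℕ) : ℝ) * g x
          = (∑ i ∈ Finset.range (n+1), (-1:ℝ)^i * (n.choose i))
            * ((-1:ℝ)^j * ((n.choose j : ℕ) : ℝ) * g x) := by
        rw [Finset.sum_mul]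
        apply Finset.sum_congr rfl
        intro i _
        rw [pow_add]
        ring
      rw [this, halt, zero_mul]
    rw [h0, zero_pow (by omega : 2*n ≠ 0)]
    ring
  · -- t ≠ 0
    have hne : (-t) ≠ 0 := neg_ne_zero.mpr ht
    have hgnn : ContDiff ℝ ((n + n : ℕ) : ℕ∞) g := by rwa [two_mul] at hg
    have hh : ContDiff ℝ (n : ℕ∞) (iteratedDeriv n g) := contDiff_iterD n g hgnn
    have hgn : ContDiff ℝ (n : ℕ∞) g := hgnn.of_le (by exact_mod_cast Nat.le_add_right n n)
    have step1 : ∀ v : Fin n → ℝ,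
        (∫ w : Fin n → ℝ in Icc 0 1, iteratedDeriv (2*n) g (x + (∑ k, (v k - w k)) * t))
        = (∑ j ∈ Finset.range (n+1), (-1:ℝ)^(n+j) * (n.choose j)
            * iteratedDeriv n g ((x + (∑ k, v k) * t) + j * (-t))) / (-t)^n := by
      intro v
      have hpt : ∀ w : Fin n → ℝ,
          iteratedDeriv (2*n) g (x + (∑ k, (v k - w k)) * t)
            = iteratedDeriv n (iteratedDeriv n g) ((x + (∑ k, v k) * t) + (∑ k, w k) * (-t)) := by
        intro w
        rw [two_mul, iterD_add]
        congr 1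
        rw [Finset.sum_sub_distrib]
        ring
      rw [integral_congr_ae (Filter.Eventually.of_forall hpt)]
      exact FD n (iteratedDeriv n g) hh (x + (∑ k, v k) * t) (-t) hne
    have step2 : (∫ v : Fin n → ℝ in Icc 0 1, ∫ w : Fin n → ℝ in Icc 0 1,
          iteratedDeriv (2*n) g (x + (∑ k, (v k - w k)) * t))
        = (∑ j ∈ Finset.range (n+1), (-1:ℝ)^(n+j) * (n.choose j)
            * ((∑ i ∈ Finset.range (n+1), (-1:ℝ)^(n+i) * (n.choose i)
              * g ((x + j * (-t)) + i * t)) / t^n)) / (-t)^n := by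
      rw [integral_congr_ae (Filter.Eventually.of_forall step1)]
      rw [integral_div, integral_finset_sum]
      · congr 1
        apply Finset.sum_congr rfl
        intro j _
        rw [integral_const_mul]
        congr 1
        have harg : ∀ v : Fin n → ℝ,
            iteratedDeriv n g ((x + (∑ k, v k) * t) + j * (-t))
              = iteratedDeriv n g ((x + j * (-t)) + (∑ k, v k) * t) := by
          intro v; ring_nf
        rw [integral_congr_ae (Filter.Eventually.of_forall harg)]
        exact FD n g hgn (x + j * (-t)) t ht
      · intro j _
        apply Integrable.const_mul
        have hc : Continuous (fun v : Fin n → ℝ =>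
            iteratedDeriv n g ((x + (∑ k, v k) * t) + j * (-t))) := by
          apply (hh.continuous).comp
          continuity
        exact hc.continuousOn.integrableOn_compact isCompact_Icc
    have hdelta : deltaOp n g x t
        = ∑ j ∈ Finset.range (n+1), ∑ i ∈ Finset.range (n+1),
            (-1:ℝ)^(i+j) * ((n.choose i : ℕ) : ℝ) * ((n.choose j : ℕ) : ℝ)
              * g (x + (((i:ℤ) - j : ℤ) : ℝ) * t) := by
      have : deltaOp n g x t
          = ∑ k ∈ Finset.Icc (-(n:ℤ)) (n:ℤ),
              (-1:ℝ)^k * (((2*n).choose ((n:ℤ)-k).toNat : ℕ) : ℝ)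
                * (fun m : ℤ => g (x + (m:ℝ) * t)) k := by
        simp only [deltaOp, zsmul_eq_mul]
      rw [this, comb_main n (fun m : ℤ => g (x + (m:ℝ) * t))]
    rw [hdelta, step2]
    have hK : (-1:ℝ)^n * t^(2*n) / (t^n * (-t)^n) = 1 := by
      rw [neg_pow, two_mul, pow_add]
      have h1 : (t:ℝ)^n ≠ 0 := pow_ne_zero _ ht
      field_simp
      ring
    conv_rhs => rw [Finset.sum_div, Finset.mul_sum]
    apply Finset.sum_congr rfl
    intro j _
    calc ∑ i ∈ Finset.range (n+1),
          (-1:ℝ)^(i+j) * ((n.choose i : ℕ) : ℝ) * ((n.choose j : ℕ) : ℝ)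
            * g (x + (((i:ℤ) - j : ℤ) : ℝ) * t)
        = ∑ i ∈ Finset.range (n+1),
            ((-1:ℝ)^(n+j) * (n.choose j)) * ((-1:ℝ)^(n+i) * (n.choose i)
              * g ((x + j * (-t)) + i * t)) := by
          apply Finset.sum_congr rfl
          intro i _
          have harg : x + (((i:ℤ) - j : ℤ):ℝ) * t = (x + j*(-t)) + i*t := by
            push_cast; ring
          rw [harg]
          have hsign : (-1:ℝ)^(n+j) * (-1:ℝ)^(n+i) = (-1:ℝ)^(i+j) := by
            rw [← pow_add, neg_one_pow_eq_pow_mod_two,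
              neg_one_pow_eq_pow_mod_two (n := i+j)]
            congr 1
            omega
          rw [← hsign]
          ring
      _ = ((-1:ℝ)^(n+j) * (n.choose j))
            * (∑ i ∈ Finset.range (n+1), (-1:ℝ)^(n+i) * (n.choose i)
              * g ((x + j * (-t)) + i * t)) := by
          rw [Finset.mul_sum]
      _ = (-1:ℝ)^n * t^(2*n) * (((-1:ℝ)^(n+j) * (n.choose j)
            * ((∑ i ∈ Finset.range (n+1), (-1:ℝ)^(n+i) * (n.choose i)
              * g ((x + j * (-t)) + i * t)) / t^n)) / (-t)^n) := by
          rw [show ∀ S : ℝ, (-1:ℝ)^n * t^(2*n) * (((-1:ℝ)^(n+j) * (n.choose j) * (S / t^n)) / (-t)^n)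
              = ((-1:ℝ)^n * t^(2*n) / (t^n * (-t)^n)) * ((-1:ℝ)^(n+j) * (n.choose j) * S)
            from fun S => by ring]
          rw [hK, one_mul]

end
end

section
/- Let N, m ∈ ℕ with N ≥ 1, s ∈ (0,m), and let α ∈ ℕ₀^N be a multi-index with |α| = m. Then 2(m-s) ∫_{B₁} y^{2α} / |y|^{N+2s} dy = ((2α)!/α!) · π^{N/2} / (2^{2m-1} Γ(N/2 + m)), where B₁ is the open unit ball in ℝ^N. -/
open MeasureTheory Real Set
open scoped Classical BigOperators RealInnerProductSpace

noncomputable section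

section
open Metric

lemma gammaNatHalf (n : ℕ) :
    Real.Gamma ((n : ℝ) + 1 / 2) =
      Real.sqrt Real.pi * ((2 * n).factorial : ℝ) / (4 ^ n * (n.factorial : ℝ)) := by
  induction n with
  | zero =>
    rw [show ((0:ℕ):ℝ) + 1/2 = 1/2 by norm_num, Real.Gamma_one_half_eq]; simp
  | succ n ih =>
    have h : ((n + 1 : ℕ) : ℝ) + 1 / 2 = ((n : ℝ) + 1 / 2) + 1 := by push_cast; ring
    have hfac : ((2 * (n + 1)).factorial : ℝ)
        = (2 * n + 2) * ((2 * n + 1) * ((2 * n).factorial : ℝ)) := by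
      rw [show 2 * (n + 1) = 2 * n + 1 + 1 by ring, Nat.factorial_succ, Nat.factorial_succ]
      push_cast; ring
    rw [h, Real.Gamma_add_one (by positivity), ih, hfac, Nat.factorial_succ]
    have hn0 : ((n.factorial : ℝ)) ≠ 0 := by positivity
    have h40 : (4 : ℝ) ^ n ≠ 0 := by positivity
    push_cast
    field_simp
    ring

lemma moment1D (a : ℕ) :
    ∫ t : ℝ, t ^ (2 * a) * Real.exp (-t ^ 2) = Real.Gamma ((a : ℝ) + 1 / 2) := by
  have h1 : ∫ t : ℝ, t ^ (2 * a) * Real.exp (-t ^ 2)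
      = ∫ t : ℝ, (fun r : ℝ => r ^ (2 * a) * Real.exp (-r ^ 2)) |t| := by
    refine integral_congr_ae (Filter.Eventually.of_forall fun t => ?_)
    simp only
    rw [(even_two_mul a).pow_abs, sq_abs]
  rw [h1, integral_comp_abs (f := fun r : ℝ => r ^ (2 * a) * Real.exp (-r ^ 2))]
  have h2 : ∫ r in Ioi (0 : ℝ), r ^ (2 * a) * Real.exp (-r ^ 2)
      = ∫ r in Ioi (0 : ℝ), r ^ ((2 * a : ℕ) : ℝ) * Real.exp (-r ^ (2 : ℝ)) := by
    refine setIntegral_congr_fun measurableSet_Ioi fun r hr => ?_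
    rw [Real.rpow_natCast, Real.rpow_two]
  rw [h2, integral_rpow_mul_exp_neg_rpow two_pos
    (lt_of_lt_of_le neg_one_lt_zero (Nat.cast_nonneg _))]
  rw [show (((2 * a : ℕ) : ℝ) + 1) / 2 = (a : ℝ) + 1 / 2 by push_cast; ring]
  ring

lemma integral_volumeIoiPow (n : ℕ) (F : ℝ → ℝ) :
    ∫ r : Ioi (0 : ℝ), F r ∂(Measure.volumeIoiPow n) = ∫ r in Ioi (0 : ℝ), r ^ n * F r := by
  simp only [Measure.volumeIoiPow, ENNReal.ofReal]
  rw [integral_withDensity_eq_integral_smul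
      ((measurable_subtype_coe.pow_const _).real_toNNReal),
    integral_subtype_comap measurableSet_Ioi fun a : ℝ => Real.toNNReal (a ^ n) • F a]
  refine setIntegral_congr_fun measurableSet_Ioi fun x hx => ?_
  rw [NNReal.smul_def, Real.coe_toNNReal _ (pow_nonneg hx.out.le _), smul_eq_mul]

lemma polarize {N : ℕ} (hN : 1 ≤ N) (g : EuclideanSpace ℝ (Fin N) → ℝ) (h : ℝ → ℝ) (d : ℕ)
    (hg : ∀ r : ℝ, 0 < r → ∀ θ : EuclideanSpace ℝ (Fin N), ‖θ‖ = 1 →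
      g (r • θ) = r ^ d * g θ) :
    ∫ y : EuclideanSpace ℝ (Fin N), g y * h ‖y‖ =
      (∫ θ : sphere (0 : EuclideanSpace ℝ (Fin N)) 1, g θ
          ∂((volume : Measure (EuclideanSpace ℝ (Fin N))).toSphere)) *
        ∫ r in Ioi (0 : ℝ), r ^ (N - 1 + d) * h r := by
  have hdim : Module.finrank ℝ (EuclideanSpace ℝ (Fin N)) = N := finrank_euclideanSpace_fin
  haveI : Nontrivial (EuclideanSpace ℝ (Fin N)) :=
    Module.nontrivial_of_finrank_pos (R := ℝ) (by rw [hdim]; exact hN)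
  have h1 : ∫ y : EuclideanSpace ℝ (Fin N), g y * h ‖y‖
      = ∫ x : ({0}ᶜ : Set (EuclideanSpace ℝ (Fin N))), g x.1 * h ‖x.1‖
          ∂((volume : Measure (EuclideanSpace ℝ (Fin N))).comap Subtype.val) := by
    rw [integral_subtype_comap (measurableSet_singleton _).compl fun x => g x * h ‖x‖,
      restrict_compl_singleton]
  have h2 : ∫ x : ({0}ᶜ : Set (EuclideanSpace ℝ (Fin N))), g x.1 * h ‖x.1‖
          ∂((volume : Measure (EuclideanSpace ℝ (Fin N))).comap Subtype.val)
      = ∫ p : sphere (0 : EuclideanSpace ℝ (Fin N)) 1 × Ioi (0 : ℝ),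
          g p.1.1 * ((p.2.1 : ℝ) ^ d * h p.2.1)
          ∂((volume : Measure (EuclideanSpace ℝ (Fin N))).toSphere.prod
              (.volumeIoiPow (Module.finrank ℝ (EuclideanSpace ℝ (Fin N)) - 1))) := by
    rw [← (volume : Measure (EuclideanSpace ℝ (Fin N))).measurePreserving_homeomorphUnitSphereProd.integral_comp
        (Homeomorph.measurableEmbedding _)
        (fun p : sphere (0 : EuclideanSpace ℝ (Fin N)) 1 × Ioi (0 : ℝ) =>
          g p.1.1 * ((p.2.1 : ℝ) ^ d * h p.2.1))]
    refine integral_congr_ae (Filter.Eventually.of_forall fun x => ?_)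
    have hx0 : (x : EuclideanSpace ℝ (Fin N)) ≠ 0 := x.2
    have hnorm : ‖(x : EuclideanSpace ℝ (Fin N))‖ ≠ 0 := norm_ne_zero_iff.2 hx0
    have hθ : ‖‖(x : EuclideanSpace ℝ (Fin N))‖⁻¹ • (x : EuclideanSpace ℝ (Fin N))‖ = 1 := by
      rw [norm_smul, norm_inv, norm_norm, inv_mul_cancel₀ hnorm]
    have key := hg ‖(x : EuclideanSpace ℝ (Fin N))‖ (norm_pos_iff.2 hx0)
      (‖(x : EuclideanSpace ℝ (Fin N))‖⁻¹ • (x : EuclideanSpace ℝ (Fin N))) hθ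
    rw [smul_inv_smul₀ hnorm] at key
    simp only [homeomorphUnitSphereProd_apply_fst_coe, homeomorphUnitSphereProd_apply_snd_coe]
    rw [key]; ring
  rw [h1, h2, integral_prod_mul (fun θ : sphere (0 : EuclideanSpace ℝ (Fin N)) 1 => g θ.1)
    (fun r : Ioi (0:ℝ) => (r : ℝ) ^ d * h r), hdim,
    integral_volumeIoiPow (N-1) (fun r => r ^ d * h r)]
  congr 1
  refine setIntegral_congr_fun measurableSet_Ioi fun r hr => ?_
  rw [pow_add]; ring


end

/-- Value of `2(m-s) ∫_{B₁} y^{2α} / |y|^{N+2s} dy` for a multi-index with `|α| = m`. -/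
theorem stmt15 (N m : ℕ) (hN : 1 ≤ N) (s : ℝ) (hs : s ∈ Set.Ioo (0 : ℝ) m)
    (α : Fin N → ℕ) (hα : ∑ i, α i = m) :
    2 * ((m : ℝ) - s) *
        ∫ y in Metric.ball (0 : EuclideanSpace ℝ (Fin N)) 1,
          (∏ i, (y i) ^ (2 * α i)) / ‖y‖ ^ ((N : ℝ) + 2 * s) =
      ((∏ i, ((2 * α i).factorial : ℝ)) / ∏ i, ((α i).factorial : ℝ)) *
        Real.pi ^ ((N : ℝ) / 2) / (2 ^ (2 * m - 1) * Real.Gamma ((N : ℝ) / 2 + m)) := by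
  obtain ⟨hs0, hsm⟩ := hs
  have hm : 1 ≤ m := by
    by_contra hc
    push_neg at hc
    interval_cases m
    · simp at hsm; linarith
  have hms : (0:ℝ) < (m : ℝ) - s := sub_pos.2 hsm
  set g : EuclideanSpace ℝ (Fin N) → ℝ := fun y => ∏ i, (y i) ^ (2 * α i) with hgdef
  have hg : ∀ r : ℝ, 0 < r → ∀ θ : EuclideanSpace ℝ (Fin N), ‖θ‖ = 1 →
      g (r • θ) = r ^ (2 * m) * g θ := by
    intro r hr θ hθ
    simp only [hgdef, PiLp.smul_apply, smul_eq_mul, mul_pow, Finset.prod_mul_distrib,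
      Finset.prod_pow_eq_pow_sum]
    rw [← Finset.mul_sum, hα]
  set S : ℝ := ∫ θ : Metric.sphere (0 : EuclideanSpace ℝ (Fin N)) 1, g θ
      ∂((volume : Measure (EuclideanSpace ℝ (Fin N))).toSphere) with hSdef
  -- cast helper
  have hcast : ((N - 1 + 2 * m : ℕ) : ℝ) = (N : ℝ) - 1 + 2 * m := by
    rw [Nat.cast_add, Nat.cast_sub hN]; push_cast; ring
  -- Step A : the ball integral
  set h₁ : ℝ → ℝ := fun r => if r < 1 then r ^ (-((N : ℝ) + 2 * s)) else 0 with h₁def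
  have hA1 : ∫ y in Metric.ball (0 : EuclideanSpace ℝ (Fin N)) 1,
      g y / ‖y‖ ^ ((N : ℝ) + 2 * s) = ∫ y : EuclideanSpace ℝ (Fin N), g y * h₁ ‖y‖ := by
    rw [← integral_indicator measurableSet_ball]
    refine integral_congr_ae (Filter.Eventually.of_forall fun y => ?_)
    by_cases hy : y ∈ Metric.ball (0 : EuclideanSpace ℝ (Fin N)) 1
    · have hy' : ‖y‖ < 1 := mem_ball_zero_iff.1 hy
      rw [indicator_of_mem hy]
      simp only [h₁def, if_pos hy']
      rw [Real.rpow_neg (norm_nonneg y), div_eq_mul_inv]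
    · have hy' : ¬ ‖y‖ < 1 := fun hc => hy (mem_ball_zero_iff.2 hc)
      rw [indicator_of_notMem hy]
      simp only [h₁def, if_neg hy', mul_zero]
  have hA2 : ∫ r in Ioi (0:ℝ), r ^ (N - 1 + 2 * m) * h₁ r = 1 / (2 * ((m : ℝ) - s)) := by
    have e1 : ∀ r ∈ Ioi (0:ℝ), r ^ (N - 1 + 2 * m) * h₁ r
        = indicator (Ioo (0:ℝ) 1) (fun r => r ^ (2 * (m:ℝ) - 2 * s - 1)) r := by
      intro r hr
      by_cases h : r < 1
      · rw [Set.indicator_of_mem (Set.mem_Ioo.mpr ⟨hr, h⟩)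
          (fun r : ℝ => r ^ (2 * (m:ℝ) - 2 * s - 1))]
        simp only [h₁def, if_pos h]
        rw [← Real.rpow_natCast r (N - 1 + 2 * m), ← Real.rpow_add hr, hcast]
        congr 1
        ring
      · rw [Set.indicator_of_notMem (fun hc => h (Set.mem_Ioo.mp hc).2)
          (fun r : ℝ => r ^ (2 * (m:ℝ) - 2 * s - 1))]
        simp only [h₁def, if_neg h, mul_zero]
    rw [setIntegral_congr_fun measurableSet_Ioi e1,
      setIntegral_indicator measurableSet_Ioo,
      inter_eq_right.mpr Ioo_subset_Ioi_self,
      ← integral_Ioc_eq_integral_Ioo, ← intervalIntegral.integral_of_le zero_le_one,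
      integral_rpow (Or.inl (by linarith))]
    rw [show (2 * (m:ℝ) - 2 * s - 1 + 1) = 2 * ((m:ℝ) - s) by ring,
      Real.one_rpow, Real.zero_rpow (by positivity)]
    norm_num
  -- Step B : the Gaussian integral
  have hB1 : ∫ y : EuclideanSpace ℝ (Fin N), g y * (fun r : ℝ => Real.exp (-r ^ 2)) ‖y‖
      = ∏ i, Real.Gamma ((α i : ℝ) + 1 / 2) := by
    have hmp : MeasurePreserving (MeasurableEquiv.toLp 2 (Fin N → ℝ)) volume volume :=
      (EuclideanSpace.volume_preserving_symm_measurableEquiv_toLp (Fin N)).symm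
    rw [← hmp.integral_comp (MeasurableEquiv.measurableEmbedding _)
      (fun y : EuclideanSpace ℝ (Fin N) => g y * Real.exp (-‖y‖ ^ 2))]
    have key : ∀ x : Fin N → ℝ,
        g ((MeasurableEquiv.toLp 2 (Fin N → ℝ)) x)
          * Real.exp (-‖(MeasurableEquiv.toLp 2 (Fin N → ℝ)) x‖ ^ 2)
        = ∏ i, ((x i) ^ (2 * α i) * Real.exp (-(x i) ^ 2)) := by
      intro x
      have h2 : ‖(MeasurableEquiv.toLp 2 (Fin N → ℝ)) x‖ ^ 2
          = ∑ i, (x i) ^ 2 := by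
        rw [EuclideanSpace.norm_eq, Real.sq_sqrt (Finset.sum_nonneg fun i _ => by positivity)]
        refine Finset.sum_congr rfl fun i _ => ?_
        rw [Real.norm_eq_abs, sq_abs]
        rfl
      rw [h2, Finset.prod_mul_distrib]
      congr 1
      rw [← Real.exp_sum]
      congr 1
      simp
    simp_rw [key]
    rw [integral_fintype_prod_volume_eq_prod (f := fun (i : Fin N) (t : ℝ) =>
      t ^ (2 * α i) * Real.exp (-t ^ 2))]
    exact Finset.prod_congr rfl fun i _ => moment1D (α i)
  have hB2 : ∫ r in Ioi (0:ℝ), r ^ (N - 1 + 2 * m) * (fun r : ℝ => Real.exp (-r ^ 2)) r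
      = (1 / 2) * Real.Gamma ((N : ℝ) / 2 + m) := by
    have e1 : ∀ r ∈ Ioi (0:ℝ), r ^ (N - 1 + 2 * m) * Real.exp (-r ^ 2)
        = r ^ (((N - 1 + 2 * m : ℕ)) : ℝ) * Real.exp (-r ^ (2:ℝ)) := by
      intro r hr
      rw [Real.rpow_natCast, Real.rpow_two]
    rw [setIntegral_congr_fun measurableSet_Ioi e1,
      integral_rpow_mul_exp_neg_rpow two_pos
        (lt_of_lt_of_le neg_one_lt_zero (Nat.cast_nonneg _)),
      show (((N - 1 + 2 * m : ℕ) : ℝ) + 1) / 2 = (N : ℝ) / 2 + m by rw [hcast]; ring]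
  -- combine
  have hΓ : 0 < Real.Gamma ((N : ℝ) / 2 + m) := Real.Gamma_pos_of_pos (by positivity)
  have hApolar := polarize hN g h₁ (2 * m) hg
  have hBpolar := polarize hN g (fun r : ℝ => Real.exp (-r ^ 2)) (2 * m) hg
  rw [hA2] at hApolar
  rw [hB2] at hBpolar
  rw [hBpolar] at hB1
  -- hB1 : S * ((1/2) * Γ) = ∏ Γ(αᵢ + 1/2)
  have hprod : ∏ i, Real.Gamma ((α i : ℝ) + 1 / 2)
      = (Real.sqrt Real.pi) ^ N * (∏ i, ((2 * α i).factorial : ℝ))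
          / (4 ^ m * ∏ i, ((α i).factorial : ℝ)) := by
    rw [Finset.prod_congr rfl fun i _ => gammaNatHalf (α i), Finset.prod_div_distrib,
      Finset.prod_mul_distrib, Finset.prod_mul_distrib, Finset.prod_const,
      Finset.card_univ, Fintype.card_fin, Finset.prod_pow_eq_pow_sum, hα]
  rw [hA1, hApolar, ← hSdef]
  -- now goal : 2 * (m - s) * (S * (1/(2*(m-s)))) = RHS
  have hSval : S = 2 * (∏ i, Real.Gamma ((α i : ℝ) + 1 / 2)) / Real.Gamma ((N : ℝ) / 2 + m) := by
    field_simp at hB1 ⊢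
    linarith
  have hsqrtpi : (Real.sqrt Real.pi) ^ N = Real.pi ^ ((N : ℝ) / 2) := by
    rw [Real.sqrt_eq_rpow, ← Real.rpow_natCast (Real.pi ^ ((1:ℝ)/2)) N,
      ← Real.rpow_mul Real.pi_nonneg]
    congr 1
    ring
  have h4m : (4 : ℝ) ^ m = 2 * 2 ^ (2 * m - 1) := by
    rw [show (4:ℝ) = 2 ^ 2 by norm_num, ← pow_mul]
    conv_lhs => rw [show 2 * m = 1 + (2 * m - 1) by omega]
    rw [pow_add, pow_one]
  rw [hSval, hprod, hsqrtpi, h4m]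
  have hfac1 : (0:ℝ) < ∏ i, ((α i).factorial : ℝ) :=
    Finset.prod_pos fun i _ => by positivity
  have h2p : (0:ℝ) < 2 ^ (2 * m - 1) := by positivity
  field_simp

end
end
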